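/- arXiv:1609.03654 — 10 statements merged into one kernel-verified Lean document; each statement's English description precedes it below -/
import Mathlib

section
/- Let c : ℕ → ℕ → ℂ take nonzero values on positive arguments and satisfy the associativity constraint c(k,l)·c(k+l,m) = c(k,l+m)·c(l,m) for all positive integers k, l, m. Define f on positive integers recursively by f(1) = 1 and f(l+1) = c(1,l)·f(l). Then f(q) ≠ 0 for all q ≥ 1, and c(q,m) = f(q+m)/(f(q)·f(m)) for all positive integers q, m. -/
/-- Solution of the associativity constraint for the ψ-product coefficient
`c(p,q)`: if `c` is nonzero on positive arguments, satisfies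
`c(k,l)·c(k+l,m) = c(k,l+m)·c(l,m)` for positive `k,l,m`, and `f` is defined
recursively by `f(1) = 1`, `f(l+1) = c(1,l)·f(l)`, then `f` is nonzero on
positive integers and `c(q,m) = f(q+m)/(f(q)·f(m))`. -/
theorem psi_product_coefficient_solution
    (c : ℕ → ℕ → ℂ)
    (hc_ne : ∀ k l : ℕ, 1 ≤ k → 1 ≤ l → c k l ≠ 0)
    (hassoc : ∀ k l m : ℕ, 1 ≤ k → 1 ≤ l → 1 ≤ m →
      c k l * c (k + l) m = c k (l + m) * c l m)
    (f : ℕ → ℂ)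
    (hf1 : f 1 = 1)
    (hfrec : ∀ l : ℕ, 1 ≤ l → f (l + 1) = c 1 l * f l) :
    (∀ q : ℕ, 1 ≤ q → f q ≠ 0) ∧
    (∀ q m : ℕ, 1 ≤ q → 1 ≤ m → c q m = f (q + m) / (f q * f m)) := by
  have hfne : ∀ q : ℕ, 1 ≤ q → f q ≠ 0 := by
    intro q hq
    induction q with
    | zero => omega
    | succ n ih =>
      rcases Nat.eq_or_lt_of_le hq with h | h
      · simp [← h, hf1]
      · have hn : 1 ≤ n := by omega
        rw [hfrec n hn]
        exact mul_ne_zero (hc_ne 1 n le_rfl hn) (ih hn)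
  refine ⟨hfne, ?_⟩
  intro q m hq hm
  induction q with
  | zero => omega
  | succ n ih =>
    rcases Nat.eq_or_lt_of_le hq with h | h
    · -- n + 1 = 1, i.e. n = 0
      have hn0 : n = 0 := by omega
      subst hn0
      have := hfrec m hm
      rw [show (1 : ℕ) + m = m + 1 from by omega, this, hf1]
      field_simp [hfne m hm]
    · have hn : 1 ≤ n := by omega
      have ha := hassoc 1 n m le_rfl hn hm
      have ihn := ih hn
      have h1 := hfrec n hn
      have h2 := hfrec (n + m) (by omega)
      have hc1n := hc_ne 1 n le_rfl hn
      have hfn := hfne n hn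
      have hfm := hfne m hm
      have hfnm := hfne (n + m) (by omega)
      -- from ha : c 1 n * c (1+n) m = c 1 (n+m) * c n m
      have : c (n + 1) m = c 1 (n + m) * c n m / c 1 n := by
        rw [show n + 1 = 1 + n from by omega]
        field_simp
        linear_combination ha
      rw [this, ihn]
      have hnm1 : n + 1 + m = n + m + 1 := by omega
      rw [hnm1, h2, h1]
      have hc1nm := hc_ne 1 (n + m) le_rfl (by omega)
      field_simp
end

section
/- Let c : ℕ → ℕ → ℂ take nonzero values on positive arguments and satisfy c(k,l)·c(k+l,m) = c(k,l+m)·c(l,m) for all positive integers k, l, m, and define f on positive integers by f(1) = 1 and f(l+1) = c(1,l)·f(l). Then for all positive integers l, m and every natural number k ≥ 0, c(l+k, m)·f(l+m)·f(l+k) = c(l, m)·f(l+m+k)·f(l). -/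
/-- Induction lemma (Eq. (eq:induction) of Appendix A) used to solve the
associativity condition for the ψ-product coefficient: for positive `l, m`
and any `k ≥ 0`, `c(l+k,m)·f(l+m)·f(l+k) = c(l,m)·f(l+m+k)·f(l)`. -/
theorem psi_product_coefficient_induction
    (c : ℕ → ℕ → ℂ)
    (hc_ne : ∀ k l : ℕ, 1 ≤ k → 1 ≤ l → c k l ≠ 0)
    (hassoc : ∀ k l m : ℕ, 1 ≤ k → 1 ≤ l → 1 ≤ m →
      c k l * c (k + l) m = c k (l + m) * c l m)
    (f : ℕ → ℂ)
    (hf1 : f 1 = 1)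
    (hfrec : ∀ l : ℕ, 1 ≤ l → f (l + 1) = c 1 l * f l) :
    ∀ l m : ℕ, 1 ≤ l → 1 ≤ m → ∀ k : ℕ,
      c (l + k) m * f (l + m) * f (l + k) = c l m * f (l + m + k) * f l := by
  intro l m hl hm k
  induction k with
  | zero => simp [mul_comm]
  | succ k ih =>
    have h1 : f (l + k + 1) = c 1 (l + k) * f (l + k) :=
      hfrec (l + k) (le_trans hl (Nat.le_add_right l k))
    have h2 : f (l + m + k + 1) = c 1 (l + m + k) * f (l + m + k) :=
      hfrec (l + m + k) (le_trans hl (by omega))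
    have h3 : c 1 (l + k) * c (1 + (l + k)) m = c 1 (l + k + m) * c (l + k) m :=
      hassoc 1 (l + k) m le_rfl (le_trans hl (Nat.le_add_right l k)) hm
    have e1 : l + (k + 1) = l + k + 1 := by ring
    have e2 : l + m + (k + 1) = l + m + k + 1 := by ring
    have e3 : 1 + (l + k) = l + k + 1 := by ring
    have e4 : l + k + m = l + m + k := by ring
    rw [e3, e4] at h3
    rw [e1, e2, h1, h2]
    have hcne : c 1 (l + m + k) ≠ 0 := hc_ne 1 (l + m + k) le_rfl (by omega)
    linear_combination (f (l + m) * f (l + k)) * h3 + c 1 (l + m + k) * ih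
end

section
/- Let f : ℕ → ℂ satisfy f(k) ≠ 0 for all k, |f(1)| = 1, and |f(k+l)|²·k!·l! = (k+l)!·|f(k)|²·|f(l)|² for all natural numbers k, l ≥ 0. Then |f(k)| = √(k!) for every natural number k. -/
/-- Core of the "only if" direction of the cluster decomposition theorem:
if `f : ℕ → ℂ` is nowhere zero, `|f(1)| = 1`, and
`|f(k+l)|²·k!·l! = (k+l)!·|f(k)|²·|f(l)|²` for all `k, l`, then
`|f(k)| = √(k!)` for every `k`. -/
theorem cluster_decomposition_normalization
    (f : ℕ → ℂ)
    (hne : ∀ k : ℕ, f k ≠ 0)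
    (hf1 : ‖f 1‖ = 1)
    (hmod : ∀ k l : ℕ,
      ‖f (k + l)‖ ^ 2 * (Nat.factorial k : ℝ) * (Nat.factorial l : ℝ) =
        (Nat.factorial (k + l) : ℝ) * ‖f k‖ ^ 2 * ‖f l‖ ^ 2) :
    ∀ k : ℕ, ‖f k‖ = Real.sqrt (Nat.factorial k : ℝ) := by
  intro k
  induction k with
  | zero =>
    have h := hmod 0 0
    simp [Nat.factorial] at h ⊢
    have h0 : 0 < ‖f 0‖ := norm_pos_iff.mpr (hne 0)
    have h2 : (1:ℝ) = ‖f 0‖ ^ 2 :=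
      mul_left_cancel₀ (pow_ne_zero 2 h0.ne')
        (by rw [mul_one]; linarith)
    rw [← Real.sqrt_one, h2, Real.sqrt_sq h0.le]
  | succ n ih =>
    have h := hmod n 1
    have hn : ‖f n‖ ^ 2 = (Nat.factorial n : ℝ) := by
      rw [ih, Real.sq_sqrt (by positivity)]
    simp [Nat.factorial, hf1, hn] at h ⊢
    have hfact : (0:ℝ) < (Nat.factorial n : ℝ) := by positivity
    have hsq : ‖f (n+1)‖ ^ 2 = (↑n + 1) * (Nat.factorial n : ℝ) :=
      h.resolve_right (Nat.factorial_ne_zero n)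
    rw [← Real.sqrt_mul (by positivity : (0:ℝ) ≤ (n:ℝ) + 1), ← hsq,
      Real.sqrt_sq (norm_nonneg _)]
end

section
/- Let V be a finite-dimensional complex vector space with dim V = d and Λ(V) its exterior algebra over ℂ. If Z ∈ Λ(V) has zero scalar component, then Zⁿ = 0 for every natural number n > ⌈d/2⌉. -/
open ExteriorAlgebra

namespace NilpAux

variable {V : Type*} [AddCommGroup V] [Module ℂ V]

lemma algebraMapInv_ι (v : V) :
    algebraMapInv (ι ℂ v : ExteriorAlgebra ℂ V) = 0 := by
  simp [algebraMapInv, lift_ι_apply]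

/-- `algebraMapInv` kills positive-degree components. -/
lemma algebraMapInv_eq_zero {i : ℕ} (hi : i ≠ 0) {x : ExteriorAlgebra ℂ V}
    (hx : x ∈ ⋀[ℂ]^i V) : algebraMapInv x = 0 := by
  obtain ⟨j, rfl⟩ := Nat.exists_eq_succ_of_ne_zero hi
  rw [exteriorPower, pow_succ'] at hx
  refine Submodule.mul_induction_on hx ?_ ?_
  · rintro m ⟨v, rfl⟩ y _
    rw [map_mul, algebraMapInv_ι, zero_mul]
  · intro a b ha hb
    rw [map_add, ha, hb, add_zero]

/-- supercommutation of `ι v` past a degree-`j` element -/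
lemma iota_comm {j : ℕ} (v : V) {y : ExteriorAlgebra ℂ V} (hy : y ∈ ⋀[ℂ]^j V) :
    ι ℂ v * y = ((-1 : ℂ) ^ j) • (y * ι ℂ v) := by
  induction j generalizing y with
  | zero =>
    rw [exteriorPower, pow_zero] at hy
    obtain ⟨c, rfl⟩ := Submodule.mem_one.mp hy
    rw [pow_zero, one_smul, Algebra.commutes]
  | succ j ih =>
    rw [exteriorPower, pow_succ'] at hy
    refine Submodule.mul_induction_on hy ?_ ?_
    · rintro m ⟨w, rfl⟩ y hy
      have h1 : ι ℂ v * ι ℂ w = -(ι ℂ w * ι ℂ v) :=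
        eq_neg_of_add_eq_zero_left (ι_add_mul_swap v w)
      calc ι ℂ v * (ι ℂ w * y) = (ι ℂ v * ι ℂ w) * y := by rw [mul_assoc]
        _ = -(ι ℂ w * (ι ℂ v * y)) := by rw [h1, neg_mul, mul_assoc]
        _ = -(ι ℂ w * (((-1 : ℂ) ^ j) • (y * ι ℂ v))) := by rw [ih hy]
        _ = ((-1 : ℂ) ^ (j + 1)) • (ι ℂ w * y * ι ℂ v) := by
            rw [mul_smul_comm, ← neg_smul, mul_assoc, pow_succ, mul_comm ((-1:ℂ)^j),
              neg_one_mul, neg_smul]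
    · intro a b ha hb
      rw [mul_add, add_mul, smul_add, ha, hb]

/-- full supercommutation -/
lemma supercomm {i j : ℕ} {x y : ExteriorAlgebra ℂ V}
    (hx : x ∈ ⋀[ℂ]^i V) (hy : y ∈ ⋀[ℂ]^j V) :
    x * y = ((-1 : ℂ) ^ (i * j)) • (y * x) := by
  induction i generalizing x with
  | zero =>
    rw [exteriorPower, pow_zero] at hx
    obtain ⟨c, rfl⟩ := Submodule.mem_one.mp hx
    rw [zero_mul, pow_zero, one_smul, Algebra.commutes]
  | succ i ih =>
    rw [exteriorPower, pow_succ'] at hx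
    refine Submodule.mul_induction_on hx ?_ ?_
    · rintro m ⟨w, rfl⟩ x hx
      calc ι ℂ w * x * y = ι ℂ w * (x * y) := by rw [mul_assoc]
        _ = ι ℂ w * (((-1 : ℂ) ^ (i * j)) • (y * x)) := by rw [ih hx]
        _ = ((-1 : ℂ) ^ (i * j)) • (ι ℂ w * y * x) := by
            rw [mul_smul_comm, mul_assoc]
        _ = ((-1 : ℂ) ^ (i * j)) • ((((-1 : ℂ) ^ j) • (y * ι ℂ w)) * x) := by
            rw [iota_comm w hy]
        _ = ((-1 : ℂ) ^ ((i + 1) * j)) • (y * (ι ℂ w * x)) := by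
            rw [smul_mul_assoc, smul_smul, ← pow_add, mul_assoc, Nat.succ_mul]
    · intro a b ha hb
      rw [add_mul, mul_add, smul_add, ha, hb]


/-- odd-odd anticommutation -/
lemma anticomm {i j : ℕ} (hi : Odd i) (hj : Odd j) {x y : ExteriorAlgebra ℂ V}
    (hx : x ∈ ⋀[ℂ]^i V) (hy : y ∈ ⋀[ℂ]^j V) :
    x * y = -(y * x) := by
  rw [supercomm hx hy, (hi.mul hj).neg_one_pow, neg_smul, one_smul]

/-- even-product commutation -/
lemma evencomm {i j : ℕ} (h : Even (i * j)) {x y : ExteriorAlgebra ℂ V}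
    (hx : x ∈ ⋀[ℂ]^i V) (hy : y ∈ ⋀[ℂ]^j V) :
    x * y = y * x := by
  rw [supercomm hx hy, h.neg_one_pow, one_smul]

/-- sum of odd-degree elements squares to zero -/
lemma odd_sum_sq (s : Finset ℕ) (hodd : ∀ i ∈ s, Odd i)
    (x : ℕ → ExteriorAlgebra ℂ V) (hx : ∀ i ∈ s, x i ∈ ⋀[ℂ]^i V) :
    (∑ i ∈ s, x i) * (∑ i ∈ s, x i) = 0 := by
  rw [Finset.sum_mul_sum]
  set S := ∑ i ∈ s, ∑ j ∈ s, x i * x j with hS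
  have h2 : S + S = 0 := by
    nth_rewrite 2 [hS]
    rw [Finset.sum_comm, hS, ← Finset.sum_add_distrib]
    refine Finset.sum_eq_zero fun i hi => ?_
    rw [← Finset.sum_add_distrib]
    refine Finset.sum_eq_zero fun j hj => ?_
    rw [anticomm (hodd i hi) (hodd j hj) (hx i hi) (hx j hj), neg_add_cancel]
  have h3 : (2 : ℂ) • S = 0 := by rw [two_smul]; exact h2
  simpa using h3

/-- the filtration by degree -/
def F (k : ℕ) : Submodule ℂ (ExteriorAlgebra ℂ V) :=
  ⨆ i : {i : ℕ // k ≤ i}, ⋀[ℂ]^(i : ℕ) V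

lemma mem_F {k i : ℕ} (h : k ≤ i) {x : ExteriorAlgebra ℂ V} (hx : x ∈ ⋀[ℂ]^i V) :
    x ∈ (F k : Submodule ℂ (ExteriorAlgebra ℂ V)) :=
  (le_iSup (fun i : {i : ℕ // k ≤ i} => ⋀[ℂ]^(i : ℕ) V) ⟨i, h⟩) hx

lemma F_mul {k l : ℕ} {x y : ExteriorAlgebra ℂ V} (hx : x ∈ F k) (hy : y ∈ F l) :
    x * y ∈ (F (k + l) : Submodule ℂ (ExteriorAlgebra ℂ V)) := by
  refine Submodule.iSup_induction _ (motive := fun x => x * y ∈ (F (k + l) : Submodule ℂ (ExteriorAlgebra ℂ V))) hx (fun i x hxi => ?_)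
    (by simp only [zero_mul]; exact Submodule.zero_mem _)
    (fun a b ha hb => by simp only [add_mul]; exact Submodule.add_mem _ ha hb)
  refine Submodule.iSup_induction _ (motive := fun y => x * y ∈ (F (k + l) : Submodule ℂ (ExteriorAlgebra ℂ V))) hy (fun j y hyj => ?_)
    (by simp only [mul_zero]; exact Submodule.zero_mem _)
    (fun a b ha hb => by simp only [mul_add]; exact Submodule.add_mem _ ha hb)
  exact mem_F (add_le_add i.2 j.2) (SetLike.mul_mem_graded hxi hyj)

lemma F_pow {k : ℕ} {x : ExteriorAlgebra ℂ V} (hx : x ∈ F k) (m : ℕ) :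
    x ^ m ∈ (F (k * m) : Submodule ℂ (ExteriorAlgebra ℂ V)) := by
  induction m with
  | zero =>
    rw [pow_zero, Nat.mul_zero]
    exact mem_F le_rfl (by rw [exteriorPower, pow_zero]; exact Submodule.one_le.mp le_rfl)
  | succ m ih =>
    rw [pow_succ, Nat.mul_succ]
    exact F_mul ih hx

/-- vanishing above the dimension -/
lemma exteriorPower_eq_zero [FiniteDimensional ℂ V] {i : ℕ}
    (hi : Module.finrank ℂ V < i) {x : ExteriorAlgebra ℂ V} (hx : x ∈ ⋀[ℂ]^i V) :
    x = 0 := by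
  rw [← ιMulti_span_fixedDegree] at hx
  induction hx using Submodule.span_induction with
  | mem x hx =>
    obtain ⟨f, rfl⟩ := hx
    refine AlternatingMap.map_linearDependent _ _ fun hf => ?_
    have := hf.fintype_card_le_finrank
    simp only [Fintype.card_fin] at this
    omega
  | zero => rfl
  | add x y _ _ hx hy => rw [hx, hy, add_zero]
  | smul c x _ hx => rw [hx, smul_zero]

lemma F_eq_bot [FiniteDimensional ℂ V] {k : ℕ} (hk : Module.finrank ℂ V < k) :
    (F k : Submodule ℂ (ExteriorAlgebra ℂ V)) = ⊥ := by
  rw [F, iSup_eq_bot]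
  intro i
  rw [Submodule.eq_bot_iff]
  exact fun x hx => exteriorPower_eq_zero (lt_of_lt_of_le hk i.2) hx

end NilpAux

open NilpAux in
/-- Nilpotency bound Eq. (eq:Z_nilpotent): if `Z` in the exterior algebra of a
`d`-dimensional complex vector space has zero scalar component, then `Zⁿ = 0`
for every `n > ⌈d/2⌉`. -/
theorem exteriorAlgebra_nilpotency_bound
    (V : Type*) [AddCommGroup V] [Module ℂ V] [FiniteDimensional ℂ V]
    (Z : ExteriorAlgebra ℂ V)
    (hZ : ExteriorAlgebra.algebraMapInv Z = 0)
    (n : ℕ) (hn : ⌈(Module.finrank ℂ V : ℚ) / 2⌉₊ < n) :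
    Z ^ n = 0 := by
  classical
  set d := Module.finrank ℂ V with hd
  set c := ⌈(d : ℚ) / 2⌉₊ with hcdef
  have hc : d ≤ 2 * c := by
    have h1 := Nat.le_ceil ((d : ℚ) / 2)
    have h2 : (d : ℚ) ≤ 2 * (c : ℚ) := by rw [hcdef]; push_cast; linarith
    exact_mod_cast h2
  set 𝒜 := fun i : ℕ => ⋀[ℂ]^i V with h𝒜
  have hZsum := DirectSum.sum_support_decompose 𝒜 Z
  set Dc := DirectSum.decompose 𝒜 Z with hDc
  -- the degree-zero component vanishes
  have h0 : (Dc 0 : ExteriorAlgebra ℂ V) = 0 := by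
    obtain ⟨r, hr⟩ : ∃ r : ℂ, algebraMap ℂ (ExteriorAlgebra ℂ V) r = (Dc 0 : ExteriorAlgebra ℂ V) := by
      have h00 : (Dc 0 : ExteriorAlgebra ℂ V)
          ∈ (LinearMap.range (ExteriorAlgebra.ι ℂ (M := V)) ^ 0 :
            Submodule ℂ (ExteriorAlgebra ℂ V)) := SetLike.coe_mem (Dc 0)
      rw [pow_zero] at h00
      exact Submodule.mem_one.mp h00
    have key : ExteriorAlgebra.algebraMapInv Z
        = ExteriorAlgebra.algebraMapInv (Dc 0 : ExteriorAlgebra ℂ V) := by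
      conv_lhs => rw [← hZsum]
      rw [map_sum]
      refine Finset.sum_eq_single 0
        (fun i _ hi => algebraMapInv_eq_zero hi (SetLike.coe_mem _)) (fun h => ?_)
      rw [DFinsupp.notMem_support_iff.mp h]
      simp
    have hr0 : r = 0 := by
      have := ExteriorAlgebra.algebraMap_leftInverse (R := ℂ) V r
      rw [hr, ← key, hZ] at this
      exact this.symm
    rw [← hr, hr0, map_zero]
  have hpos : ∀ i ∈ DFinsupp.support Dc, i ≠ 0 := by
    intro i hi h
    subst h
    exact DFinsupp.mem_support_iff.mp hi (by ext; exact h0)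
  set A := ∑ i ∈ (DFinsupp.support Dc).filter (fun i => Odd i),
    (Dc i : ExteriorAlgebra ℂ V) with hA
  set B := ∑ i ∈ (DFinsupp.support Dc).filter (fun i => ¬ Odd i),
    (Dc i : ExteriorAlgebra ℂ V) with hB
  have hAB : A + B = Z := by
    rw [hA, hB, Finset.sum_filter_add_sum_filter_not]
    exact hZsum
  have hA1 : A ∈ (F 1 : Submodule ℂ (ExteriorAlgebra ℂ V)) := by
    refine Submodule.sum_mem _ fun i hi => ?_
    exact mem_F ((Finset.mem_filter.mp hi).2.pos) (SetLike.coe_mem _)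
  have hB2 : B ∈ (F 2 : Submodule ℂ (ExteriorAlgebra ℂ V)) := by
    refine Submodule.sum_mem _ fun i hi => ?_
    obtain ⟨hi1, hi2⟩ := Finset.mem_filter.mp hi
    refine mem_F ?_ (SetLike.coe_mem _)
    obtain ⟨r, rfl⟩ := Nat.not_odd_iff_even.mp hi2
    have := hpos _ hi1
    omega
  have hA2 : A * A = 0 := by
    refine odd_sum_sq _ (fun i hi => (Finset.mem_filter.mp hi).2) _
      (fun i hi => SetLike.coe_mem _)
  have hcomm : Commute A B := by
    rw [hA, hB]
    refine Commute.sum_left _ _ _ fun i hi => Commute.sum_right _ _ _ fun j hj => ?_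
    exact evencomm ((Nat.not_odd_iff_even.mp (Finset.mem_filter.mp hj).2).mul_left i)
      (SetLike.coe_mem _) (SetLike.coe_mem _)
  rw [← hAB, hcomm.add_pow]
  refine Finset.sum_eq_zero fun k hk => ?_
  match k with
  | 0 =>
    have hmem := F_pow hB2 n
    have hbot : (F (2 * n) : Submodule ℂ (ExteriorAlgebra ℂ V)) = ⊥ :=
      F_eq_bot (by omega)
    rw [hbot] at hmem
    rw [Submodule.mem_bot] at hmem
    rw [pow_zero, one_mul, Nat.sub_zero, hmem, zero_mul]
  | 1 =>
    have hmem := F_mul hA1 (F_pow hB2 (n - 1))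
    have hbot : (F (1 + 2 * (n - 1)) : Submodule ℂ (ExteriorAlgebra ℂ V)) = ⊥ :=
      F_eq_bot (by omega)
    rw [hbot] at hmem
    rw [Submodule.mem_bot] at hmem
    rw [pow_one, hmem, zero_mul]
  | (k + 2) =>
    have hz : A ^ (k + 2) = 0 := by rw [pow_add, pow_two, hA2, mul_zero]
    rw [hz, zero_mul, zero_mul]
end

section
/- Let 𝒜 be a complex Banach algebra and let A, B ∈ 𝒜 be such that C := AB − BA commutes with both A and B and satisfies C² = 0. Then exp(A + B) = ½·(exp(A)·exp(B) + exp(B)·exp(A)). -/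
open NormedSpace

section Aux

variable {𝒜 : Type*} [NormedRing 𝒜] [NormedAlgebra ℂ 𝒜] [CompleteSpace 𝒜]

private theorem exp_conj_aux (A B : 𝒜) (hCA : Commute (A * B - B * A) A) (t : ℂ) :
    exp (t • A) * B = (B + t • (A * B - B * A)) * exp (t • A) := by
  set C := A * B - B * A with hC
  have h1 : C * A = A * C := hCA.eq
  have key : ∀ s : ℂ, HasDerivAt
      (fun u : ℂ => exp (u • (-A)) * ((B + u • C) * exp (u • A))) 0 s := by
    intro s
    have d1 : HasDerivAt (fun u : ℂ => exp (u • (-A))) (exp (s • (-A)) * (-A)) s :=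
      hasDerivAt_exp_smul_const (-A) s
    have d2 : HasDerivAt (fun u : ℂ => B + u • C) C s := by
      simpa using ((hasDerivAt_id s).smul_const C).const_add B
    have d3 : HasDerivAt (fun u : ℂ => exp (u • A)) (A * exp (s • A)) s :=
      hasDerivAt_exp_smul_const' A s
    have := d1.mul (d2.mul d3)
    convert this using 1
    · rfl
    set E := exp (s • A)
    set F := exp (s • (-A))
    have calc1 : (-A) * (B + s • C) + (C + (B + s • C) * A) = 0 := by
      simp only [mul_add, add_mul, neg_mul, mul_smul_comm, smul_mul_assoc, h1]
      rw [hC]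
      abel_nf
      simp
    calc (0 : 𝒜) = F * (((-A) * (B + s • C) + (C + (B + s • C) * A)) * E) := by
          rw [calc1]; simp
      _ = F * (-A) * ((B + s • C) * E) + F * (C * E + (B + s • C) * (A * E)) := by
          noncomm_ring
  have const := is_const_of_deriv_eq_zero (𝕜 := ℂ)
    (fun s => (key s).differentiableAt) (fun s => (key s).deriv) t 0
  simp only [zero_smul, exp_zero, mul_one, one_mul, add_zero] at const
  have hinv : exp (t • A) * exp (t • (-A)) = 1 := by
    letI : NormedAlgebra ℚ 𝒜 := NormedAlgebra.restrictScalars ℚ ℂ 𝒜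
    rw [smul_neg, ← exp_add_of_commute (Commute.refl (t • A)).neg_right, add_neg_cancel, exp_zero]
  calc exp (t • A) * B
      = exp (t • A) * (exp (t • (-A)) * ((B + t • C) * exp (t • A))) := by rw [const]
    _ = (exp (t • A) * exp (t • (-A))) * ((B + t • C) * exp (t • A)) := by rw [mul_assoc]
    _ = (B + t • C) * exp (t • A) := by rw [hinv, one_mul]

private theorem exp_mul_exp_aux (A B : 𝒜)
    (hCA : Commute (A * B - B * A) A) (hCB : Commute (A * B - B * A) B)
    (hC2 : (A * B - B * A) ^ 2 = 0) :
    exp A * exp B = exp (A + B) + (2 : ℂ)⁻¹ • (exp (A + B) * (A * B - B * A)) := by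
  set C := A * B - B * A with hC
  have hCAB : Commute C (A + B) := hCA.add_right hCB
  set f : ℂ → 𝒜 := fun t => exp (t • (-(A + B))) * (exp (t • A) * exp (t • B)) with hf
  have hf' : ∀ t : ℂ, HasDerivAt f (t • (C * f t)) t := by
    intro t
    have d1 : HasDerivAt (fun u : ℂ => exp (u • (-(A + B))))
        (exp (t • (-(A + B))) * (-(A + B))) t := hasDerivAt_exp_smul_const _ t
    have d2 : HasDerivAt (fun u : ℂ => exp (u • A)) (A * exp (t • A)) t :=
      hasDerivAt_exp_smul_const' A t
    have d3 : HasDerivAt (fun u : ℂ => exp (u • B)) (B * exp (t • B)) t :=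
      hasDerivAt_exp_smul_const' B t
    have := d1.mul (d2.mul d3)
    convert this using 1
    · rfl
    set EA := exp (t • A)
    set EB := exp (t • B)
    set EN := exp (t • (-(A + B)))
    have hCEN : C * EN = EN * C :=
      ((hCAB.neg_right.smul_right t).exp_right).eq
    have hswap : EA * B = (B + t • C) * EA := exp_conj_aux A B hCA t
    have expand : t • (C * f t) =
        EN * ((-(A + B) + (A + (B + t • C))) * (EA * EB)) := by
      have h0 : (-(A + B) + (A + (B + t • C))) = t • C := by abel
      rw [h0, hf]
      simp only [smul_mul_assoc, mul_smul_comm]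
      congr 1
      simp only [← mul_assoc]
      rw [hCEN]
    rw [expand]
    have h1 : EA * (B * EB) = ((B + t • C) * EA) * EB := by rw [← mul_assoc, hswap]
    calc EN * ((-(A + B) + (A + (B + t • C))) * (EA * EB))
        = EN * (-(A + B)) * (EA * EB) + EN * (A * EA * EB + EA * (B * EB)) := by
          rw [h1]; noncomm_ring
      _ = EN * -(A + B) * (EA * EB) + EN * (A * EA * EB + EA * (B * EB)) := by
          rw [h1]
  have hu : ∀ t : ℂ, HasDerivAt (fun s => f s - (s ^ 2 / 2) • (C * f s)) 0 t := by
    intro t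
    have dsq : HasDerivAt (fun s : ℂ => s ^ 2 / 2) t t := by
      have := (hasDerivAt_pow 2 t).div_const 2
      norm_num at this
      simpa using this
    have dCf : HasDerivAt (fun s => C * f s) (C * (t • (C * f t))) t :=
      (hf' t).const_mul C
    have := (hf' t).sub (dsq.smul dCf)
    convert this using 1
    · rfl
    · rfl
    have hCC : C * (t • (C * f t)) = 0 := by
      rw [mul_smul_comm, ← mul_assoc, ← pow_two, hC2, zero_mul, smul_zero]
    rw [hCC]
    simp
  have const := is_const_of_deriv_eq_zero (𝕜 := ℂ)
    (fun s => (hu s).differentiableAt) (fun s => (hu s).deriv) 1 0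
  have hf0 : f 0 = 1 := by simp [hf]
  simp only [hf0, one_pow, zero_pow, mul_one, ne_eq, OfNat.ofNat_ne_zero,
    not_false_eq_true, zero_div, zero_smul, sub_zero] at const
  set X := f 1 with hX
  have hX1 : X - (2:ℂ)⁻¹ • (C * X) = 1 := by
    rw [hX, ← const]; norm_num; rfl
  have hCX : C * X = C := by
    have h2 := congrArg (fun y => C * y) hX1
    simp only [mul_sub, mul_smul_comm, ← mul_assoc, ← pow_two, hC2, zero_mul,
      smul_zero, sub_zero, mul_one] at h2
    exact h2
  have hXval : X = 1 + (2:ℂ)⁻¹ • C := by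
    rw [hCX] at hX1
    exact sub_eq_iff_eq_add.mp hX1
  have hMN : exp (A + B) * exp (-(A + B)) = 1 := by
    letI : NormedAlgebra ℚ 𝒜 := NormedAlgebra.restrictScalars ℚ ℂ 𝒜
    rw [← exp_add_of_commute (Commute.refl (A + B)).neg_right, add_neg_cancel, exp_zero]
  have hfX : exp (A + B) * X = exp A * exp B := by
    rw [hX, hf]
    simp only [one_smul]
    rw [← mul_assoc, hMN, one_mul]
  rw [hXval] at hfX
  rw [← hfX, mul_add, mul_one, mul_smul_comm]

end Aux

/-- Symmetrized-product exponential identity Eq. (eq:expAplusB): in a complex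
Banach algebra, if `C = AB − BA` commutes with `A` and `B` and `C² = 0`, then
`exp(A+B) = ½(exp A · exp B + exp B · exp A)`. -/
theorem exp_add_eq_symmetrized_product
    (𝒜 : Type*) [NormedRing 𝒜] [NormedAlgebra ℂ 𝒜] [CompleteSpace 𝒜]
    (A B : 𝒜)
    (hCA : Commute (A * B - B * A) A)
    (hCB : Commute (A * B - B * A) B)
    (hC2 : (A * B - B * A) ^ 2 = 0) :
    exp (A + B) = (2 : ℂ)⁻¹ • (exp A * exp B + exp B * exp A) := by
  have h1 := exp_mul_exp_aux A B hCA hCB hC2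
  have hCA' : Commute (B * A - A * B) B := by
    have := hCB.neg_left; simpa [neg_sub] using this
  have hCB' : Commute (B * A - A * B) A := by
    have := hCA.neg_left; simpa [neg_sub] using this
  have hC2' : (B * A - A * B) ^ 2 = 0 := by
    have : (B * A - A * B) = -(A * B - B * A) := by abel
    rw [this, neg_pow]
    simp [hC2]
  have h2 := exp_mul_exp_aux B A hCA' hCB' hC2'
  rw [add_comm B A] at h2
  have hswap : (B * A - A * B) = -(A * B - B * A) := by abel
  rw [hswap] at h2
  rw [h1, h2]
  set M := exp (A + B)
  set D := M * (A * B - B * A)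
  rw [mul_neg]
  module
end

section
/- Let 𝒜 be a complex Banach algebra and let A, D ∈ 𝒜 be such that AD − DA commutes with both A and D and satisfies (AD − DA)² = 0. Then the map t ↦ exp(A + t·D), t ∈ ℝ, is differentiable at t = 0 with derivative ½·(D·exp(A) + exp(A)·D). -/
open NormedSpace

section Aux

variable {𝒜 : Type*} [NormedRing 𝒜] [NormedAlgebra ℂ 𝒜] [CompleteSpace 𝒜]


/-- Derivative of `t ↦ exp((t:ℂ) • W)` along the real line. -/
lemma hasDerivAt_exp_real_smul (W : 𝒜) (u : ℝ) :
    HasDerivAt (fun t : ℝ => exp ((t : ℂ) • W)) (exp ((u : ℂ) • W) * W) u := by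
  have h : HasDerivAt (fun z : ℂ => exp (z • W)) (exp (((u : ℝ) : ℂ) • W) * W)
      ((u : ℝ) : ℂ) := hasDerivAt_exp_smul_const W _
  have hco : HasDerivAt (fun t : ℝ => ((t : ℝ) : ℂ)) ((1 : ℝ) : ℂ) u := by
    simpa using (hasDerivAt_id u).ofReal_comp
  have h' : HasDerivAt ((fun z : ℂ => exp (z • W)) ∘ (fun t : ℝ => ((t : ℝ) : ℂ)))
      (((1 : ℝ) : ℂ) • (exp (((u : ℝ) : ℂ) • W) * W)) u :=
    HasDerivAt.scomp u h hco
  simpa [Function.comp_def] using h'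

/-- Commutator with an exponential: if `Z = XY - YX` commutes with `Y`, then
`X e^{sY} = e^{sY} (X + s Z)`. -/
lemma mul_exp_of_commutator (X Y : 𝒜) (hZ : Commute (X * Y - Y * X) Y) (s : ℝ) :
    X * exp ((s : ℂ) • Y) = exp ((s : ℂ) • Y) * (X + (s : ℂ) • (X * Y - Y * X)) := by
  set Z := X * Y - Y * X with hZdef
  set ψ : ℝ → 𝒜 := fun u => exp ((u : ℂ) • (-Y)) * X * exp ((u : ℂ) • Y) - (u : ℂ) • Z
    with hψ
  have hEE : ∀ u : ℝ, exp ((u : ℂ) • (-Y)) * exp ((u : ℂ) • Y) = 1 := by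
    intro u
    rw [← exp_add_of_commute_of_mem_ball (((Commute.refl Y).neg_left.smul_left _).smul_right _) ((expSeries_radius_eq_top ℂ 𝒜).symm ▸ edist_lt_top _ _) ((expSeries_radius_eq_top ℂ 𝒜).symm ▸ edist_lt_top _ _)]
    simp [smul_neg]
  have hEE' : ∀ u : ℝ, exp ((u : ℂ) • Y) * exp ((u : ℂ) • (-Y)) = 1 := by
    intro u
    rw [← exp_add_of_commute_of_mem_ball (((Commute.refl Y).neg_right.smul_left _).smul_right _) ((expSeries_radius_eq_top ℂ 𝒜).symm ▸ edist_lt_top _ _) ((expSeries_radius_eq_top ℂ 𝒜).symm ▸ edist_lt_top _ _)]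
    simp [smul_neg]
  have hderiv : ∀ u : ℝ, HasDerivAt ψ 0 u := by
    intro u
    have h1 := hasDerivAt_exp_real_smul (-Y) u
    have h2 := hasDerivAt_exp_real_smul Y u
    have h3 : HasDerivAt (fun t : ℝ => (t : ℂ) • Z) ((1 : ℂ) • Z) u := by
      exact ((hasDerivAt_id u).ofReal_comp).smul_const Z
    have h := ((h1.mul_const X).mul h2).sub h3
    have hYE : exp ((u : ℂ) • Y) * Y = Y * exp ((u : ℂ) • Y) :=
      (((Commute.refl Y).smul_left ((u : ℝ) : ℂ)).exp_left).eq
    have hZE : Z * exp ((u : ℂ) • Y) = exp ((u : ℂ) • Y) * Z :=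
      ((hZ.smul_right ((u : ℝ) : ℂ)).exp_right).eq
    have hval : exp ((u : ℂ) • (-Y)) * (-Y) * X * exp ((u : ℂ) • Y) +
        exp ((u : ℂ) • (-Y)) * X * (exp ((u : ℂ) • Y) * Y) - (1 : ℂ) • Z = 0 := by
      rw [hYE, one_smul]
      have : exp ((u : ℂ) • (-Y)) * (-Y) * X * exp ((u : ℂ) • Y) +
          exp ((u : ℂ) • (-Y)) * X * (Y * exp ((u : ℂ) • Y)) =
          exp ((u : ℂ) • (-Y)) * (Z * exp ((u : ℂ) • Y)) := by
        rw [hZdef]; noncomm_ring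
      rw [this, hZE, ← mul_assoc, hEE u, one_mul, sub_self]
    exact hval ▸ h
  have hconst : ψ s = ψ 0 :=
    is_const_of_deriv_eq_zero (fun u => (hderiv u).differentiableAt)
      (fun u => (hderiv u).deriv) s 0
  have hψ0 : ψ 0 = X := by simp [hψ, exp_zero]
  rw [hψ0] at hconst
  -- hconst : exp (s • (-Y)) * X * exp (s • Y) - s • Z = X
  have h' : exp ((s : ℂ) • (-Y)) * X * exp ((s : ℂ) • Y) = X + (s : ℂ) • Z :=
    eq_add_of_sub_eq hconst
  calc X * exp ((s : ℂ) • Y)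
      = (exp ((s : ℂ) • Y) * exp ((s : ℂ) • (-Y))) * X * exp ((s : ℂ) • Y) := by
        rw [hEE' s, one_mul]
    _ = exp ((s : ℂ) • Y) * (exp ((s : ℂ) • (-Y)) * X * exp ((s : ℂ) • Y)) := by
        noncomm_ring
    _ = exp ((s : ℂ) • Y) * (X + (s : ℂ) • Z) := by rw [h']

/-- an inner algebraic identity -/
lemma inner_zero {R : Type*} [Ring R] (X Y M N : R) (hM : M * (X + Y) = (X + Y) * M)
    (hNM : N * M = 0) :
    ((X + N) + Y) * (1 - M) - N - (1 - M) * (X + Y) = 0 := by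
  simp only [mul_sub, sub_mul, mul_one, one_mul]
  rw [hM]
  simp only [add_mul, hNM]
  abel

/-- Truncated Baker–Campbell–Hausdorff: if `Z = XY − YX` commutes with `X` and
`Y` and `Z² = 0`, then `exp(X+Y) = exp X · exp Y · (1 − ½ Z)`. -/
lemma exp_add_of_commutator_sq_zero (X Y : 𝒜)
    (hZX : Commute (X * Y - Y * X) X) (hZY : Commute (X * Y - Y * X) Y)
    (hZ2 : (X * Y - Y * X) ^ 2 = 0) :
    exp (X + Y) = exp X * exp Y * (1 - (2 : ℂ)⁻¹ • (X * Y - Y * X)) := by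
  set Z := X * Y - Y * X with hZdef
  set φ : ℝ → 𝒜 := fun u => exp ((u : ℂ) • X) * exp ((u : ℂ) • Y) *
      (1 - ((u : ℂ) * (u : ℂ) * (2 : ℂ)⁻¹) • Z) * exp ((u : ℂ) • (-(X + Y))) with hφ
  have hderiv : ∀ u : ℝ, HasDerivAt φ 0 u := by
    intro u
    have h1 := hasDerivAt_exp_real_smul X u
    have h2 := hasDerivAt_exp_real_smul Y u
    have h4 := hasDerivAt_exp_real_smul (-(X + Y)) u
    have hofReal : HasDerivAt (fun t : ℝ => (t : ℂ)) 1 u := by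
      simpa using (hasDerivAt_id u).ofReal_comp
    have h3' : HasDerivAt (fun t : ℝ => ((t : ℂ) * (t : ℂ) * (2 : ℂ)⁻¹) • Z) ((u : ℂ) • Z) u := by
      have := ((hofReal.mul hofReal).mul_const ((2 : ℂ)⁻¹)).smul_const Z
      convert this using 2
      · rfl
      · rfl
      ring
    have h3 : HasDerivAt (fun t : ℝ => (1 : 𝒜) - ((t : ℂ) * (t : ℂ) * (2 : ℂ)⁻¹) • Z)
        (-((u : ℂ) • Z)) u := h3'.const_sub 1
    have h := ((h1.mul h2).mul h3).mul h4
    set E1 := exp ((u : ℂ) • X)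
    set E2 := exp ((u : ℂ) • Y)
    set E4 := exp ((u : ℂ) • (-(X + Y)))
    set N : 𝒜 := (u : ℂ) • Z with hN
    set M : 𝒜 := ((u : ℂ) * (u : ℂ) * (2 : ℂ)⁻¹) • Z with hM
    have hXE2 : X * E2 = E2 * (X + N) := mul_exp_of_commutator X Y hZY u
    have hE4c : E4 * (X + Y) = (X + Y) * E4 := by
      have : Commute ((u : ℂ) • (-(X + Y))) (X + Y) :=
        ((Commute.refl (X + Y)).neg_left).smul_left _
      exact (this.exp_left).eq
    have hMc : M * (X + Y) = (X + Y) * M :=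
      (((hZX.add_right hZY).smul_left _).eq)
    have hZZ : Z * Z = 0 := by rw [← sq, hZ2]
    have hNM : N * M = 0 := by
      rw [hN, hM, smul_mul_assoc, mul_smul_comm, smul_smul, hZZ, smul_zero]
    have hval : ((E1 * X * E2 + E1 * (E2 * Y)) * (1 - M) + E1 * E2 * (-N)) * E4 +
        E1 * E2 * (1 - M) * (E4 * (-(X + Y))) = 0 := by
      have hrw : ((E1 * X * E2 + E1 * (E2 * Y)) * (1 - M) + E1 * E2 * (-N)) * E4 +
          E1 * E2 * (1 - M) * (E4 * (-(X + Y))) =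
          E1 * (E2 * ((((X + N) + Y) * (1 - M) - N - (1 - M) * (X + Y)) * E4)) := by
        rw [mul_assoc E1 X E2, hXE2]
        simp only [mul_neg]
        rw [hE4c]
        noncomm_ring
      rw [hrw, inner_zero X Y M N hMc hNM]
      simp
    exact hval ▸ h
  have hconst : φ 1 = φ 0 :=
    is_const_of_deriv_eq_zero (fun u => (hderiv u).differentiableAt)
      (fun u => (hderiv u).deriv) 1 0
  have hφ0 : φ 0 = 1 := by simp [hφ, exp_zero]
  have hφ1 : exp X * exp Y * (1 - (2 : ℂ)⁻¹ • Z) * exp (-(X + Y)) = 1 := by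
    have := hconst.trans hφ0
    simpa [hφ, one_smul] using this
  have hinv : exp (-(X + Y)) * exp (X + Y) = 1 := by
    rw [← exp_add_of_commute_of_mem_ball (Commute.refl (X + Y)).neg_left ((expSeries_radius_eq_top ℂ 𝒜).symm ▸ edist_lt_top _ _) ((expSeries_radius_eq_top ℂ 𝒜).symm ▸ edist_lt_top _ _), neg_add_cancel, exp_zero]
  calc exp (X + Y)
      = 1 * exp (X + Y) := (one_mul _).symm
    _ = exp X * exp Y * (1 - (2 : ℂ)⁻¹ • Z) * exp (-(X + Y)) * exp (X + Y) := by
        rw [hφ1]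
    _ = exp X * exp Y * (1 - (2 : ℂ)⁻¹ • Z) *
          (exp (-(X + Y)) * exp (X + Y)) := by rw [mul_assoc]
    _ = exp X * exp Y * (1 - (2 : ℂ)⁻¹ • Z) := by rw [hinv, mul_one]

end Aux

/-- First-order variation formula Eq. (eq:delta_eA): in a complex Banach
algebra, if `AD − DA` commutes with `A` and `D` and squares to zero, then
`t ↦ exp(A + t·D)` is differentiable at `t = 0` with derivative
`½(D·exp A + exp A·D)`. -/
theorem hasDerivAt_exp_symmetrized
    (𝒜 : Type*) [NormedRing 𝒜] [NormedAlgebra ℂ 𝒜] [CompleteSpace 𝒜]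
    (A D : 𝒜)
    (hCA : Commute (A * D - D * A) A)
    (hCD : Commute (A * D - D * A) D)
    (hC2 : (A * D - D * A) ^ 2 = 0) :
    HasDerivAt (fun t : ℝ => exp (A + (t : ℂ) • D))
      ((2 : ℂ)⁻¹ • (D * exp A + exp A * D)) 0 := by
  set C := A * D - D * A with hCdef
  have hfun : ∀ t : ℝ, exp (A + (t : ℂ) • D) =
      exp A * (exp ((t : ℂ) • D) * (1 - (2 : ℂ)⁻¹ • ((t : ℂ) • C))) := by
    intro t
    have hZt : A * ((t : ℂ) • D) - ((t : ℂ) • D) * A = (t : ℂ) • C := by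
      rw [mul_smul_comm, smul_mul_assoc, ← smul_sub, hCdef]
    have := exp_add_of_commutator_sq_zero A ((t : ℂ) • D)
      (by rw [hZt]; exact hCA.smul_left _)
      (by rw [hZt]; exact (hCD.smul_left _).smul_right _)
      (by rw [hZt, smul_pow, hC2, smul_zero])
    rw [hZt] at this
    rw [this, mul_assoc]
  have h2' : HasDerivAt (fun t : ℝ => exp ((t : ℂ) • D)) D 0 := by
    have := hasDerivAt_exp_real_smul D 0
    simpa [exp_zero] using this
  have h3 : HasDerivAt (fun t : ℝ => (1 : 𝒜) - (2 : ℂ)⁻¹ • ((t : ℂ) • C))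
      (-((2 : ℂ)⁻¹ • C)) 0 := by
    have hid : HasDerivAt (fun t : ℝ => (t : ℂ) • C) ((1 : ℂ) • C) 0 :=
      ((hasDerivAt_id (0 : ℝ)).ofReal_comp).smul_const C
    have := (hid.const_smul ((2 : ℂ)⁻¹)).const_sub 1
    simpa using this
  have h := (h2'.mul h3).const_mul (exp A)
  have hDexp : D * exp A = exp A * (D - C) := by
    have hc : Commute (D * A - A * D) A := by
      have := hCA.neg_left
      rwa [neg_sub] at this
    have := mul_exp_of_commutator D A hc 1
    simpa [hCdef, neg_sub, sub_eq_add_neg] using this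
  have hval : exp A * (D * (1 - (2 : ℂ)⁻¹ • ((0 : ℂ) • C)) +
      exp ((0 : ℂ) • D) * (-((2 : ℂ)⁻¹ • C))) =
      (2 : ℂ)⁻¹ • (D * exp A + exp A * D) := by
    simp only [Complex.ofReal_zero, zero_smul, smul_zero, sub_zero, mul_one, exp_zero, one_mul]
    rw [hDexp]
    simp only [mul_add, mul_sub, mul_neg, mul_smul_comm, smul_add, smul_sub]
    module
  have hfeq : (fun t : ℝ => exp (A + (t : ℂ) • D)) =
      fun t : ℝ => exp A * (exp ((t : ℂ) • D) * (1 - (2 : ℂ)⁻¹ • ((t : ℂ) • C))) :=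
    funext hfun
  rw [hfeq]
  exact hval ▸ h
end

section
/- Let R be an associative unital algebra over ℚ (so that 2 is invertible), let U ∈ R be a unit with inverse U⁻¹, and let A, B ∈ R satisfy the double-commutator conditions [[U,B],U⁻¹] = 0 and [[U⁻¹,A],U] = 0, where [X,Y] := XY − YX. Then B = ½(UA + AU) if and only if A = ½(U⁻¹B + BU⁻¹). -/
/-- Switch-basis equivalence Eq. (eq:switch_basis): in an associative unital
ℚ-algebra, if `U` is a unit and the double commutators `[[U,B],U⁻¹]` and
`[[U⁻¹,A],U]` vanish, then `B = ½(UA + AU)` iff `A = ½(U⁻¹B + BU⁻¹)`. -/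
theorem switch_basis_equivalence
    (R : Type*) [Ring R] [Algebra ℚ R]
    (U : Rˣ) (A B : R)
    (h1 : ((U : R) * B - B * U) * (↑U⁻¹ : R) - (↑U⁻¹ : R) * ((U : R) * B - B * U) = 0)
    (h2 : ((↑U⁻¹ : R) * A - A * (↑U⁻¹ : R)) * U - (U : R) * ((↑U⁻¹ : R) * A - A * (↑U⁻¹ : R)) = 0) :
    B = (2⁻¹ : ℚ) • ((U : R) * A + A * U) ↔
      A = (2⁻¹ : ℚ) • ((↑U⁻¹ : R) * B + B * (↑U⁻¹ : R)) := by
  have hUV : (U : R) * (↑U⁻¹ : R) = 1 := U.mul_inv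
  have hVU : (↑U⁻¹ : R) * (U : R) = 1 := U.inv_mul
  have e2 : (↑U⁻¹ : R) * A * U + (U : R) * (A * ↑U⁻¹) = A + A := by
    have key : ((↑U⁻¹ : R) * A - A * (↑U⁻¹ : R)) * U
        - (U : R) * ((↑U⁻¹ : R) * A - A * (↑U⁻¹ : R))
        = (↑U⁻¹ : R) * A * U + (U : R) * (A * ↑U⁻¹)
          - (A * ((↑U⁻¹ : R) * U) + ((U : R) * ↑U⁻¹) * A) := by noncomm_ring
    rw [h2, hVU, hUV, mul_one, one_mul] at key
    exact sub_eq_zero.mp key.symm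
  have e1 : (U : R) * B * ↑U⁻¹ + (↑U⁻¹ : R) * (B * U) = B + B := by
    have key : ((U : R) * B - B * (U : R)) * (↑U⁻¹ : R)
        - (↑U⁻¹ : R) * ((U : R) * B - B * (U : R))
        = (U : R) * B * ↑U⁻¹ + (↑U⁻¹ : R) * (B * U)
          - (B * ((U : R) * ↑U⁻¹) + ((↑U⁻¹ : R) * U) * B) := by noncomm_ring
    rw [h1, hUV, hVU, mul_one, one_mul] at key
    exact sub_eq_zero.mp key.symm
  constructor
  · intro h
    have key : (↑U⁻¹ : R) * B + B * (↑U⁻¹ : R) = (2 : ℚ) • A := by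
      calc (↑U⁻¹ : R) * B + B * (↑U⁻¹ : R)
          = (↑U⁻¹ : R) * ((2⁻¹ : ℚ) • ((U : R) * A + A * U))
            + ((2⁻¹ : ℚ) • ((U : R) * A + A * U)) * (↑U⁻¹ : R) := by rw [← h]
        _ = (2⁻¹ : ℚ) • ((↑U⁻¹ : R) * ((U : R) * A + A * U)
            + ((U : R) * A + A * U) * (↑U⁻¹ : R)) := by
              rw [mul_smul_comm, smul_mul_assoc, smul_add]
        _ = (2⁻¹ : ℚ) • (((↑U⁻¹ : R) * U) * A
            + ((↑U⁻¹ : R) * A * U + (U : R) * (A * ↑U⁻¹)) + A * ((U : R) * ↑U⁻¹)) := by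
              congr 1; noncomm_ring
        _ = (2⁻¹ : ℚ) • (A + (A + A) + A) := by rw [hVU, hUV, e2, one_mul, mul_one]
        _ = (2 : ℚ) • A := by module
    rw [key, smul_smul]; norm_num
  · intro h
    have key : (U : R) * A + A * (U : R) = (2 : ℚ) • B := by
      calc (U : R) * A + A * (U : R)
          = (U : R) * ((2⁻¹ : ℚ) • ((↑U⁻¹ : R) * B + B * ↑U⁻¹))
            + ((2⁻¹ : ℚ) • ((↑U⁻¹ : R) * B + B * ↑U⁻¹)) * (U : R) := by rw [← h]
        _ = (2⁻¹ : ℚ) • ((U : R) * ((↑U⁻¹ : R) * B + B * ↑U⁻¹)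
            + ((↑U⁻¹ : R) * B + B * ↑U⁻¹) * (U : R)) := by
              rw [mul_smul_comm, smul_mul_assoc, smul_add]
        _ = (2⁻¹ : ℚ) • (((U : R) * ↑U⁻¹) * B
            + ((U : R) * B * ↑U⁻¹ + (↑U⁻¹ : R) * (B * U)) + B * ((↑U⁻¹ : R) * U)) := by
              congr 1; noncomm_ring
        _ = (2⁻¹ : ℚ) • (B + (B + B) + B) := by rw [hUV, hVU, e1, one_mul, mul_one]
        _ = (2 : ℚ) • B := by module
    rw [key, smul_smul]; norm_num
end

section
/- Let E be a complex Hilbert space with inner product ⟨·,·⟩ conjugate-linear in the first argument, let P be the orthogonal projection onto a closed subspace of E, and let n, h ∈ E satisfy Pn = Ph = 0, n ≠ 0, and ⟨n, h⟩ ∈ ℝ. Set K := h − (⟨n,h⟩/‖n‖²)·n and assume K ≠ 0. Then for every Δu ∈ E, (Im⟨Δu, n⟩)²/‖n‖² + (Im⟨Δu, K⟩)²/‖K‖² ≤ ‖Δu − PΔu‖², and equality holds if and only if there exist real numbers C_K and C_N such that Δu − PΔu = i·(C_K·K + C_N·n). -/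
lemma phase_orbit_core {E : Type*} [NormedAddCommGroup E] [InnerProductSpace ℂ E]
    (n K' v : E) (hn : n ≠ 0) (hK'ne : K' ≠ 0) (horth : (inner ℂ n K' : ℂ) = 0) :
    ((inner ℂ v n : ℂ).im) ^ 2 / ‖n‖ ^ 2 + ((inner ℂ v K' : ℂ).im) ^ 2 / ‖K'‖ ^ 2 ≤ ‖v‖ ^ 2 ∧
    (((inner ℂ v n : ℂ).im) ^ 2 / ‖n‖ ^ 2 + ((inner ℂ v K' : ℂ).im) ^ 2 / ‖K'‖ ^ 2 = ‖v‖ ^ 2 ↔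
      ∃ CK CN : ℝ, v = Complex.I • ((CK : ℂ) • K' + (CN : ℂ) • n)) := by
  have hnn : (0:ℝ) < ‖n‖ := norm_pos_iff.mpr hn
  have hKK : (0:ℝ) < ‖K'‖ := norm_pos_iff.mpr hK'ne
  have hnne : ((‖n‖:ℂ))^2 ≠ 0 := pow_ne_zero 2 (Complex.ofReal_ne_zero.mpr hnn.ne')
  have hKne : ((‖K'‖:ℂ))^2 ≠ 0 := pow_ne_zero 2 (Complex.ofReal_ne_zero.mpr hKK.ne')
  obtain ⟨a, ha⟩ : ∃ a : ℂ, a = (inner ℂ n v : ℂ) / (‖n‖:ℂ)^2 := ⟨_, rfl⟩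
  obtain ⟨b, hb⟩ : ∃ b : ℂ, b = (inner ℂ K' v : ℂ) / (‖K'‖:ℂ)^2 := ⟨_, rfl⟩
  obtain ⟨w, hw⟩ : ∃ w : E, w = v - a • n - b • K' := ⟨_, rfl⟩
  have hKn : (inner ℂ K' n : ℂ) = 0 := by
    rw [← inner_conj_symm, horth]; simp
  have hselfn : (inner ℂ n n : ℂ) = (‖n‖:ℂ)^2 := inner_self_eq_norm_sq_to_K n
  have hselfK : (inner ℂ K' K' : ℂ) = (‖K'‖:ℂ)^2 := inner_self_eq_norm_sq_to_K K'
  have hnv : (inner ℂ n v : ℂ) = a * (‖n‖:ℂ)^2 := by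
    rw [ha]; field_simp [Complex.ofReal_ne_zero.mpr hnn.ne']
  have hKv : (inner ℂ K' v : ℂ) = b * (‖K'‖:ℂ)^2 := by
    rw [hb]; field_simp [Complex.ofReal_ne_zero.mpr hKK.ne']
  have hnw : (inner ℂ n w : ℂ) = 0 := by
    rw [hw, inner_sub_right, inner_sub_right, inner_smul_right, inner_smul_right,
      hselfn, horth, hnv]; ring
  have hKw : (inner ℂ K' w : ℂ) = 0 := by
    rw [hw, inner_sub_right, inner_sub_right, inner_smul_right, inner_smul_right,
      hselfK, hKn, hKv]; ring
  have hwn : (inner ℂ w n : ℂ) = 0 := by rw [← inner_conj_symm, hnw]; simp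
  have hwK : (inner ℂ w K' : ℂ) = 0 := by rw [← inner_conj_symm, hKw]; simp
  have hv : v = w + (a • n + b • K') := by rw [hw]; abel
  have hperp : (inner ℂ w (a • n + b • K') : ℂ) = 0 := by
    rw [inner_add_right, inner_smul_right, inner_smul_right, hwn, hwK]; ring
  have hsplit1 : ‖v‖^2 = ‖w‖^2 + ‖a • n + b • K'‖^2 := by
    rw [hv, sq, sq, sq, norm_add_sq_eq_norm_sq_add_norm_sq_of_inner_eq_zero _ _ hperp]
  have hperp2 : (inner ℂ (a • n) (b • K') : ℂ) = 0 := by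
    rw [inner_smul_left, inner_smul_right, horth]; ring
  have hsplit2 : ‖a • n + b • K'‖^2 = ‖a‖^2 * ‖n‖^2 + ‖b‖^2 * ‖K'‖^2 := by
    rw [sq, norm_add_sq_eq_norm_sq_add_norm_sq_of_inner_eq_zero _ _ hperp2,
      norm_smul, norm_smul]; ring
  have habs : ∀ z : ℂ, ‖z‖^2 = z.re^2 + z.im^2 := by
    intro z
    rw [Complex.sq_norm, Complex.normSq_apply]; ring
  have hvnorm : ‖v‖^2 = ‖w‖^2 + (a.re^2 + a.im^2) * ‖n‖^2 + (b.re^2 + b.im^2) * ‖K'‖^2 := by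
    rw [hsplit1, hsplit2, habs a, habs b]; ring
  have hvn : (inner ℂ v n : ℂ) = (starRingEnd ℂ) a * (‖n‖:ℂ)^2 := by
    rw [← inner_conj_symm, hnv]; simp
  have hvK : (inner ℂ v K' : ℂ) = (starRingEnd ℂ) b * (‖K'‖:ℂ)^2 := by
    rw [← inner_conj_symm, hKv]; simp
  have him0 : ∀ r : ℝ, ((r:ℂ)^2).im = 0 := by
    intro r; rw [← Complex.ofReal_pow]; exact Complex.ofReal_im _
  have hre0 : ∀ r : ℝ, ((r:ℂ)^2).re = r^2 := by
    intro r; rw [← Complex.ofReal_pow]; exact Complex.ofReal_re _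
  have himn : (inner ℂ v n : ℂ).im = -a.im * ‖n‖^2 := by
    rw [hvn, Complex.mul_im, him0, hre0, Complex.conj_im]; ring
  have himK : (inner ℂ v K' : ℂ).im = -b.im * ‖K'‖^2 := by
    rw [hvK, Complex.mul_im, him0, hre0, Complex.conj_im]; ring
  have hLHS : ((inner ℂ v n : ℂ).im) ^ 2 / ‖n‖ ^ 2 + ((inner ℂ v K' : ℂ).im) ^ 2 / ‖K'‖ ^ 2
      = a.im^2 * ‖n‖^2 + b.im^2 * ‖K'‖^2 := by
    rw [himn, himK]
    field_simp
  have keyEq : ‖v‖^2 - (((inner ℂ v n : ℂ).im) ^ 2 / ‖n‖ ^ 2 + ((inner ℂ v K' : ℂ).im) ^ 2 / ‖K'‖ ^ 2)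
      = ‖w‖^2 + a.re^2 * ‖n‖^2 + b.re^2 * ‖K'‖^2 := by
    rw [hLHS, hvnorm]; ring
  have t1 : (0:ℝ) ≤ ‖w‖^2 := sq_nonneg _
  have t2 : (0:ℝ) ≤ a.re^2 * ‖n‖^2 := by positivity
  have t3 : (0:ℝ) ≤ b.re^2 * ‖K'‖^2 := by positivity
  refine ⟨by linarith, ?_, ?_⟩
  · intro heq
    have h0 : ‖w‖^2 + a.re^2 * ‖n‖^2 + b.re^2 * ‖K'‖^2 = 0 := by linarith
    have hw0 : ‖w‖^2 = 0 := by linarith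
    have ha0 : a.re^2 * ‖n‖^2 = 0 := by linarith
    have hb0 : b.re^2 * ‖K'‖^2 = 0 := by linarith
    have hare : a.re = 0 := by
      have := (mul_eq_zero.mp ha0).resolve_right (by positivity)
      exact pow_eq_zero_iff (n := 2) (by norm_num) |>.mp this
    have hbre : b.re = 0 := by
      have := (mul_eq_zero.mp hb0).resolve_right (by positivity)
      exact pow_eq_zero_iff (n := 2) (by norm_num) |>.mp this
    have hwz : w = 0 := norm_eq_zero.mp (sq_eq_zero_iff.mp hw0)
    refine ⟨b.im, a.im, ?_⟩
    have haI : a = Complex.I * a.im := by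
      apply Complex.ext <;> simp [hare]
    have hbI : b = Complex.I * b.im := by
      apply Complex.ext <;> simp [hbre]
    have hv' : v = a • n + b • K' := by
      rw [hv, hwz, zero_add]
    rw [hv']
    conv_lhs => rw [haI, hbI]
    rw [smul_add, smul_smul, smul_smul]
    abel
  · rintro ⟨CK, CN, rfl⟩
    have hinner : (inner ℂ n (Complex.I • ((CK:ℂ) • K' + (CN:ℂ) • n)) : ℂ)
        = Complex.I * CN * (‖n‖:ℂ)^2 := by
      rw [inner_smul_right, inner_add_right, inner_smul_right, inner_smul_right,
        horth, hselfn]; ring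
    have hinner2 : (inner ℂ K' (Complex.I • ((CK:ℂ) • K' + (CN:ℂ) • n)) : ℂ)
        = Complex.I * CK * (‖K'‖:ℂ)^2 := by
      rw [inner_smul_right, inner_add_right, inner_smul_right, inner_smul_right,
        hKn, hselfK]; ring
    have hav : a = Complex.I * CN := by
      rw [ha, hinner]; field_simp [Complex.ofReal_ne_zero.mpr hnn.ne']
    have hbv : b = Complex.I * CK := by
      rw [hb, hinner2]; field_simp [Complex.ofReal_ne_zero.mpr hKK.ne']
    have hare : a.re = 0 := by rw [hav]; simp
    have hbre : b.re = 0 := by rw [hbv]; simp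
    have hwz : w = 0 := by
      rw [hw, hav, hbv]; module
    have hwn0 : ‖w‖^2 = 0 := by rw [hwz]; simp
    have e2 : a.re^2 * ‖n‖^2 = 0 := by rw [hare]; ring
    have e3 : b.re^2 * ‖K'‖^2 = 0 := by rw [hbre]; ring
    linarith

/-- Phase-orbit inequality `λ(φ,Δt) ≥ 0` of Sec. 7.4 with its equality
condition: with `P` the orthogonal projection onto a closed subspace,
`Pn = Ph = 0`, `n ≠ 0`, `⟨n,h⟩` real, and `K = h − (⟨n,h⟩/‖n‖²)·n ≠ 0`,
one has `(Im⟨Δu,n⟩)²/‖n‖² + (Im⟨Δu,K⟩)²/‖K‖² ≤ ‖Δu − PΔu‖²`, with equality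
iff `Δu − PΔu = i(C_K·K + C_N·n)` for some reals `C_K, C_N`. -/
theorem phase_orbit_inequality
    (E : Type*) [NormedAddCommGroup E] [InnerProductSpace ℂ E] [CompleteSpace E]
    (K : Submodule ℂ E) (hK : IsClosed (K : Set E))
    (P : E →ₗ[ℂ] E)
    (hP : ∀ x : E, P x ∈ K ∧ x - P x ∈ Kᗮ)
    (n h : E) (hPn : P n = 0) (hPh : P h = 0) (hn : n ≠ 0)
    (hreal : (inner ℂ n h : ℂ).im = 0)
    (K' : E) (hK' : K' = h - ((inner ℂ n h : ℂ) / ((‖n‖ : ℂ) ^ 2)) • n)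
    (hK'ne : K' ≠ 0) :
    ∀ Δu : E,
      ((inner ℂ Δu n : ℂ).im) ^ 2 / ‖n‖ ^ 2 + ((inner ℂ Δu K' : ℂ).im) ^ 2 / ‖K'‖ ^ 2 ≤
        ‖Δu - P Δu‖ ^ 2 ∧
      (((inner ℂ Δu n : ℂ).im) ^ 2 / ‖n‖ ^ 2 + ((inner ℂ Δu K' : ℂ).im) ^ 2 / ‖K'‖ ^ 2 =
          ‖Δu - P Δu‖ ^ 2 ↔
        ∃ CK CN : ℝ, Δu - P Δu =
          Complex.I • ((CK : ℂ) • K' + (CN : ℂ) • n)) := by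
  intro Δu
  have hnn : (0:ℝ) < ‖n‖ := norm_pos_iff.mpr hn
  have hnne : ((‖n‖:ℂ))^2 ≠ 0 := pow_ne_zero 2 (Complex.ofReal_ne_zero.mpr hnn.ne')
  have hnK : n ∈ Kᗮ := by
    have := (hP n).2; rwa [hPn, sub_zero] at this
  have hselfn : (inner ℂ n n : ℂ) = (‖n‖:ℂ)^2 := inner_self_eq_norm_sq_to_K n
  have horth : (inner ℂ n K' : ℂ) = 0 := by
    rw [hK', inner_sub_right, inner_smul_right, hselfn]
    field_simp [Complex.ofReal_ne_zero.mpr hnn.ne']; simp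
  have h1 : (inner ℂ Δu n : ℂ) = inner ℂ (Δu - P Δu) n := by
    rw [inner_sub_left, (Submodule.mem_orthogonal K n).mp hnK _ (hP Δu).1, sub_zero]
  have hhK : h ∈ Kᗮ := by
    have := (hP h).2; rwa [hPh, sub_zero] at this
  have hKK' : K' ∈ Kᗮ := by
    rw [hK']; exact Submodule.sub_mem _ hhK (Submodule.smul_mem _ _ hnK)
  have h2 : (inner ℂ Δu K' : ℂ) = inner ℂ (Δu - P Δu) K' := by
    rw [inner_sub_left, (Submodule.mem_orthogonal K K').mp hKK' _ (hP Δu).1, sub_zero]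
  rw [h1, h2]
  exact phase_orbit_core n K' (Δu - P Δu) hn hK'ne horth
end

section
/- Let b be a positive natural number and let F, G : ℂ^b → ℂ be entire functions (analytic on all of ℂ^b) such that for every positive integer k, ∫_{ℂ^b} |F(z)|²·exp(−‖z‖²/k²) dz < ∞ and ∫_{ℂ^b} |G(z)|²·exp(−‖z‖²/k²) dz < ∞, the integrals being with respect to Lebesgue measure on ℂ^b ≅ ℝ^{2b} and ‖z‖² := ∑ᵢ |zᵢ|². Then for every positive integer k, ∫_{ℂ^b} |F(z)·G(z)|²·exp(−‖z‖²/k²) dz < ∞. -/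
open MeasureTheory Metric Set

lemma mv_circle {f : ℂ → ℂ} (hf : Differentiable ℂ f) (c : ℂ) {r : ℝ} (hr : 0 < r) :
    2 * Real.pi * ‖f c‖ ≤ ∫ θ in (0:ℝ)..(2*Real.pi), ‖f (circleMap c r θ)‖ := by
  have h1 : (∮ z in C(c, r), (z - c)⁻¹ • f z) = (2 * Real.pi * Complex.I : ℂ) • f c :=
    (hf.differentiableOn).circleIntegral_sub_inv_smul (mem_ball_self hr)
  rw [circleIntegral] at h1
  simp only [deriv_circleMap, circleMap_sub_center, smul_eq_mul] at h1
  have h2 : ∀ θ : ℝ, circleMap 0 r θ * Complex.I * ((circleMap 0 r θ)⁻¹ * f (circleMap c r θ))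
      = Complex.I * f (circleMap c r θ) := by
    intro θ
    have hne : circleMap 0 r θ ≠ 0 := by
      simpa using circleMap_ne_center (c := 0) hr.ne' (θ := θ)
    field_simp
  simp only [h2] at h1
  rw [intervalIntegral.integral_const_mul] at h1
  have h3 : (∫ θ in (0:ℝ)..(2*Real.pi), f (circleMap c r θ)) = (2 * Real.pi : ℝ) * f c := by
    apply mul_left_cancel₀ Complex.I_ne_zero
    rw [h1]
    push_cast
    ring
  have h4 : ‖∫ θ in (0:ℝ)..(2*Real.pi), f (circleMap c r θ)‖ = 2 * Real.pi * ‖f c‖ := by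
    rw [h3]
    simp [norm_mul, abs_of_nonneg Real.pi_nonneg]
  rw [← h4]
  exact intervalIntegral.norm_integral_le_integral_norm (by positivity)

lemma polar_symm (r θ : ℝ) : Complex.polarCoord.symm (r, θ) = circleMap 0 r θ := by
  simp [Complex.polarCoord_symm_apply, circleMap, Complex.exp_mul_I]

lemma mv_ball {f : ℂ → ℂ} (hf : Differentiable ℂ f) (c : ℂ) :
    Real.pi * ‖f c‖ ≤ ∫ w in closedBall c 1, ‖f w‖ := by
  have pi_pos := Real.pi_pos
  have hcont : Continuous fun w : ℂ => ‖f w‖ := hf.continuous.norm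
  set q : ℝ × ℝ → ℝ := fun p => p.1 * ‖f (circleMap c p.1 p.2)‖ with hq
  have hqcont : Continuous q := by
    apply continuous_fst.mul
    apply hcont.comp
    exact (continuous_const.add ((Complex.continuous_ofReal.comp continuous_fst).mul
      ((Complex.ofRealCLM.continuous.comp continuous_snd).mul continuous_const).cexp))
  -- the rectangle
  set R : Set (ℝ × ℝ) := Ioo (0:ℝ) 1 ×ˢ Ioo (-Real.pi) Real.pi with hR
  -- polar coordinates: ∫ over rectangle of q = ∫ over ball c 1 of ‖f‖
  have key : ∫ p in R, q p = ∫ w in ball c 1, ‖f w‖ := by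
    have hpolar := Complex.integral_comp_polarCoord_symm
      (Set.indicator (ball (0:ℂ) 1) fun w => ‖f (c + w)‖)
    -- RHS of hpolar
    have hrhs : (∫ w, Set.indicator (ball (0:ℂ) 1) (fun w => ‖f (c + w)‖) w)
        = ∫ w in ball c 1, ‖f w‖ := by
      rw [integral_indicator measurableSet_ball]
      have hemb : MeasurableEmbedding (fun x : ℂ => c + x) :=
        (MeasurableEquiv.addLeft c).measurableEmbedding
      have hmp : MeasurePreserving (fun x : ℂ => c + x) volume volume :=
        measurePreserving_add_left volume c
      have := hmp.setIntegral_preimage_emb hemb (fun w => ‖f w‖) (ball c 1)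
      rw [← this]
      congr 1
      ext x
      simp [mem_ball, dist_eq_norm]
    -- LHS of hpolar
    have hlhs : (∫ p in polarCoord.target,
        p.1 • Set.indicator (ball (0:ℂ) 1) (fun w => ‖f (c + w)‖) (Complex.polarCoord.symm p))
        = ∫ p in R, q p := by
      have h1 : ∀ p : ℝ × ℝ, p.1 • Set.indicator (ball (0:ℂ) 1)
          (fun w => ‖f (c + w)‖) (Complex.polarCoord.symm p)
          = Set.indicator ((fun p : ℝ × ℝ => Complex.polarCoord.symm p) ⁻¹' ball (0:ℂ) 1)
            (fun p : ℝ × ℝ => p.1 * ‖f (c + Complex.polarCoord.symm p)‖) p := by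
        intro p
        by_cases hp : Complex.polarCoord.symm p ∈ ball (0:ℂ) 1
        · rw [Set.indicator_of_mem hp, Set.indicator_of_mem (by exact hp)]
          simp
        · rw [Set.indicator_of_notMem hp, Set.indicator_of_notMem (by exact hp)]
          simp
      simp_rw [h1]
      have hmeas : MeasurableSet ((fun p : ℝ × ℝ => Complex.polarCoord.symm p) ⁻¹' ball (0:ℂ) 1) := by
        have heq : (fun p : ℝ × ℝ => (Complex.polarCoord.symm p : ℂ))
            = fun p => circleMap 0 p.1 p.2 := funext fun p => polar_symm p.1 p.2
        have : Continuous fun p : ℝ × ℝ => (Complex.polarCoord.symm p : ℂ) := by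
          rw [heq]
          exact (continuous_const.add ((Complex.continuous_ofReal.comp continuous_fst).mul
            ((Complex.ofRealCLM.continuous.comp continuous_snd).mul continuous_const).cexp))
        exact this.measurable measurableSet_ball
      rw [setIntegral_indicator hmeas]
      have hset : polarCoord.target ∩
          ((fun p : ℝ × ℝ => Complex.polarCoord.symm p) ⁻¹' ball (0:ℂ) 1) = R := by
        ext ⟨r, θ⟩
        simp only [polarCoord_target, R, Set.mem_inter_iff, Set.mem_prod, Set.mem_Ioi,
          Set.mem_Ioo, Set.mem_preimage, mem_ball, polar_symm, dist_zero_right,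
          norm_circleMap_zero]
        constructor
        · rintro ⟨⟨hr, hθ⟩, habs⟩
          exact ⟨⟨hr, by rwa [abs_of_pos hr] at habs⟩, hθ⟩
        · rintro ⟨⟨hr, hr1⟩, hθ⟩
          exact ⟨⟨hr, hθ⟩, by rwa [abs_of_pos hr]⟩
      rw [hset]
      congr 1
      funext p
      rw [polar_symm]
      simp only [q]
      congr 2
      simp [circleMap]
    rw [hlhs, hrhs] at hpolar
    exact hpolar
  -- integrability on the rectangle
  have hqint : IntegrableOn q R := by
    apply (hqcont.continuousOn.integrableOn_compact
      ((isCompact_Icc (a := (0:ℝ)) (b := 1)).prod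
        (isCompact_Icc (a := -Real.pi) (b := Real.pi)))).mono_set
    exact Set.prod_mono Set.Ioo_subset_Icc_self Set.Ioo_subset_Icc_self
  -- Fubini
  have hfub : ∫ p in R, q p
      = ∫ r in Ioo (0:ℝ) 1, ∫ θ in Ioo (-Real.pi) Real.pi, q (r, θ) := by
    rw [hR, MeasureTheory.Measure.volume_eq_prod] at hqint ⊢
    exact setIntegral_prod q hqint
  -- the outer function is integrable
  have hout : IntegrableOn (fun r => ∫ θ in Ioo (-Real.pi) Real.pi, q (r, θ)) (Ioo (0:ℝ) 1) := by
    rw [hR, MeasureTheory.Measure.volume_eq_prod, IntegrableOn, ← Measure.prod_restrict] at hqint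
    exact hqint.integral_prod_left
  -- pointwise lower bound on the inner integral
  have hpt : ∀ r ∈ Ioo (0:ℝ) 1,
      (2 * Real.pi * ‖f c‖) * r ≤ ∫ θ in Ioo (-Real.pi) Real.pi, q (r, θ) := by
    intro r hr
    have h1 : ∫ θ in Ioo (-Real.pi) Real.pi, q (r, θ)
        = r * ∫ θ in Ioo (-Real.pi) Real.pi, ‖f (circleMap c r θ)‖ := by
      simp only [q]
      exact integral_const_mul r _
    have h2 : ∫ θ in Ioo (-Real.pi) Real.pi, ‖f (circleMap c r θ)‖
        = ∫ θ in (-Real.pi)..Real.pi, ‖f (circleMap c r θ)‖ := by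
      rw [intervalIntegral.integral_of_le (by linarith), integral_Ioc_eq_integral_Ioo]
    have hper : Function.Periodic (fun θ => ‖f (circleMap c r θ)‖) (2 * Real.pi) :=
      (periodic_circleMap c r).comp fun z => ‖f z‖
    have h3 : ∫ θ in (-Real.pi)..Real.pi, ‖f (circleMap c r θ)‖
        = ∫ θ in (0:ℝ)..(2*Real.pi), ‖f (circleMap c r θ)‖ := by
      have := hper.intervalIntegral_add_eq (-Real.pi) 0
      rw [zero_add] at this
      have hpp : -Real.pi + 2 * Real.pi = Real.pi := by ring
      rw [hpp] at this
      exact this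
    rw [h1, h2, h3]
    calc (2 * Real.pi * ‖f c‖) * r = r * (2 * Real.pi * ‖f c‖) := by ring
    _ ≤ r * ∫ θ in (0:ℝ)..(2*Real.pi), ‖f (circleMap c r θ)‖ :=
        mul_le_mul_of_nonneg_left (mv_circle hf c hr.1) hr.1.le
  -- integrate the lower bound
  have hlow : Real.pi * ‖f c‖ ≤ ∫ r in Ioo (0:ℝ) 1, ∫ θ in Ioo (-Real.pi) Real.pi, q (r, θ) := by
    have hconst : IntegrableOn (fun r : ℝ => (2 * Real.pi * ‖f c‖) * r) (Ioo (0:ℝ) 1) :=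
      ((continuous_const.mul continuous_id).continuousOn.integrableOn_compact
        (isCompact_Icc (a := (0:ℝ)) (b := 1))).mono_set Ioo_subset_Icc_self
    have hhalf : ∫ r in Ioo (0:ℝ) 1, r = 1/2 := by
      rw [← integral_Ioc_eq_integral_Ioo, ← intervalIntegral.integral_of_le zero_le_one]
      simp
    calc Real.pi * ‖f c‖ = (2 * Real.pi * ‖f c‖) * (1/2) := by ring
    _ = ∫ r in Ioo (0:ℝ) 1, (2 * Real.pi * ‖f c‖) * r := by
        rw [integral_const_mul, hhalf]
    _ ≤ _ := setIntegral_mono_on hconst hout measurableSet_Ioo hpt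
  have hballCB : ∫ w in ball c 1, ‖f w‖ ≤ ∫ w in closedBall c 1, ‖f w‖ := by
    apply setIntegral_mono_set
    · exact hcont.continuousOn.integrableOn_compact (isCompact_closedBall c 1)
    · exact Filter.Eventually.of_forall fun w => norm_nonneg _
    · exact HasSubset.Subset.eventuallyLE ball_subset_closedBall
  calc Real.pi * ‖f c‖ ≤ _ := hlow
  _ = ∫ p in R, q p := hfub.symm
  _ = ∫ w in ball c 1, ‖f w‖ := key
  _ ≤ _ := hballCB

lemma analytic_cons_left {n : ℕ} {h : (Fin (n+1) → ℂ) → ℂ}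
    (hh : ∀ x, AnalyticAt ℂ h x) (y₀ : Fin n → ℂ) :
    Differentiable ℂ fun x : ℂ => h (Fin.cons x y₀) := by
  intro x₀
  have hd : (fun x : ℂ => h (Fin.cons x y₀))
      = fun x => h (Fin.cons (0:ℂ) y₀ + x • Fin.cons (1:ℂ) (0 : Fin n → ℂ)) := by
    funext x
    congr 1
    funext j
    refine Fin.cases ?_ (fun i => ?_) j <;> simp
  have hA : AnalyticAt ℂ (fun x : ℂ => h (Fin.cons x y₀)) x₀ := by
    rw [hd]
    exact (hh _).comp (analyticAt_const.add
      (((ContinuousLinearMap.id ℂ ℂ).smulRight ((Fin.cons (1:ℂ) (0 : Fin n → ℂ)) : Fin (n+1) → ℂ)).analyticAt x₀))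
  exact hA.differentiableAt

lemma analytic_cons_right {n : ℕ} {h : (Fin (n+1) → ℂ) → ℂ}
    (hh : ∀ x, AnalyticAt ℂ h x) (x : ℂ) :
    ∀ y₀, AnalyticAt ℂ (fun y : Fin n → ℂ => h (Fin.cons x y)) y₀ := by
  intro y₀
  set L : (Fin n → ℂ) →L[ℂ] (Fin (n+1) → ℂ) :=
    ContinuousLinearMap.pi (fun j : Fin (n+1) =>
      Fin.cases 0 (fun i => ContinuousLinearMap.proj i) j) with hL
  have hd : (fun y : Fin n → ℂ => h (Fin.cons x y))
      = fun y => h (Fin.cons x (0 : Fin n → ℂ) + L y) := by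
    funext y
    congr 1
    funext j
    refine Fin.cases ?_ (fun i => ?_) j <;> simp [hL]
  rw [hd]
  exact (hh _).comp (analyticAt_const.add (L.analyticAt y₀))

lemma mv_polydisc : ∀ (n : ℕ) (h : (Fin n → ℂ) → ℂ), (∀ x, AnalyticAt ℂ h x) →
    ∀ z : Fin n → ℂ,
    Real.pi ^ n * ‖h z‖ ≤ ∫ w in Set.univ.pi fun i => closedBall (z i) 1, ‖h w‖ := by
  intro n
  induction n with
  | zero =>
    intro h hh z
    have huniv : (Set.univ.pi fun i : Fin 0 => closedBall (z i) 1) = Set.univ := by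
      ext w
      simp
    rw [huniv, setIntegral_univ, pow_zero, one_mul]
    have h0 : (fun w : Fin 0 → ℂ => ‖h w‖) = fun _ => ‖h z‖ :=
      funext fun w => congrArg _ (congrArg h (Subsingleton.elim w z))
    rw [h0, integral_const]
    have h2 : volume (Set.univ : Set (Fin 0 → ℂ)) = 1 := by
      simp [volume_pi]
    rw [measureReal_def, h2]
    simp
  | succ n ih =>
    intro h hh z
    set e := MeasurableEquiv.piFinSuccAbove (fun _ : Fin (n+1) => ℂ) 0 with he
    have hmp := measurePreserving_piFinSuccAbove (fun _ : Fin (n+1) => (volume : Measure ℂ)) 0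
    set y₀ : Fin n → ℂ := fun i => z i.succ with hy₀
    set T : Set (ℂ × (Fin n → ℂ)) :=
      closedBall (z 0) 1 ×ˢ (Set.univ.pi fun i : Fin n => closedBall (y₀ i) 1) with hT
    set H : ℂ × (Fin n → ℂ) → ℂ := fun p => h (Fin.cons p.1 p.2) with hH
    have hcont : Continuous h := continuous_iff_continuousAt.2 fun x => (hh x).continuousAt
    have hHcont : Continuous H := by
      apply hcont.comp
      apply continuous_pi
      intro j
      refine Fin.cases ?_ (fun i => ?_) j
      · simpa using (continuous_fst : Continuous fun p : ℂ × (Fin n → ℂ) => p.1)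
      · have hc : Continuous fun p : ℂ × (Fin n → ℂ) => p.2 i := (continuous_apply i).comp continuous_snd
        simpa using hc
    have hpre : (Set.univ.pi fun i : Fin (n+1) => closedBall (z i) 1) = e ⁻¹' T := by
      ext w
      simp only [hT, he, Set.mem_pi, Set.mem_univ, forall_true_left, Set.mem_preimage,
        MeasurableEquiv.piFinSuccAbove_apply, Set.mem_prod, Fin.zero_succAbove, hy₀]
      exact Fin.forall_fin_succ
    have hHw : ∀ w, H (e w) = h w := by
      intro w
      simp only [hH, he, MeasurableEquiv.piFinSuccAbove_apply, Fin.zero_succAbove]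
      exact congrArg h (Fin.cons_self_tail w)
    have hTm : IntegrableOn (fun p => ‖H p‖) T ((volume : Measure ℂ).prod volume) := by
      rw [← MeasureTheory.Measure.volume_eq_prod]
      exact (hHcont.norm.continuousOn).integrableOn_compact
        ((isCompact_closedBall _ _).prod (isCompact_univ_pi fun i => isCompact_closedBall _ _))
    have step1 : ∫ w in Set.univ.pi fun i : Fin (n+1) => closedBall (z i) 1, ‖h w‖
        = ∫ p in T, ‖H p‖ ∂((volume : Measure ℂ).prod (volume : Measure (Fin n → ℂ))) := by
      have hmp' : MeasurePreserving (⇑e) (volume : Measure (Fin (n+1) → ℂ))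
          ((volume : Measure ℂ).prod (volume : Measure (Fin n → ℂ))) := hmp
      have hTmeas : MeasurableSet T :=
        measurableSet_closedBall.prod (MeasurableSet.univ_pi fun i => measurableSet_closedBall)
      rw [hpre, ← hmp'.setIntegral_preimage_emb e.measurableEmbedding (fun p => ‖H p‖) T]
      exact setIntegral_congr_fun (e.measurable hTmeas)
        fun w _ => (congrArg Norm.norm (hHw w)).symm
    have hTm' : Integrable (fun p => ‖H p‖)
        (((volume : Measure ℂ).restrict (closedBall (z 0) 1)).prod
          ((volume : Measure (Fin n → ℂ)).restrict (Set.univ.pi fun i => closedBall (y₀ i) 1))) := by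
      rw [Measure.prod_restrict, ← hT]
      exact hTm
    have hout : IntegrableOn
        (fun x => ∫ y in Set.univ.pi fun i => closedBall (y₀ i) 1, ‖H (x, y)‖)
        (closedBall (z 0) 1) := hTm'.integral_prod_left
    have hlhsint : IntegrableOn (fun x : ℂ => Real.pi ^ n * ‖H (x, y₀)‖) (closedBall (z 0) 1) :=
      ((continuous_const.mul ((hHcont.norm).comp
        (continuous_id.prodMk continuous_const))).continuousOn).integrableOn_compact
        (isCompact_closedBall _ _)
    have h1d := mv_ball (analytic_cons_left hh y₀) (z 0)
    have hz : Fin.cons (z 0) y₀ = z := Fin.cons_self_tail z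
    calc Real.pi ^ (n+1) * ‖h z‖
        = Real.pi ^ n * (Real.pi * ‖h (Fin.cons (z 0) y₀)‖) := by rw [hz]; ring
    _ ≤ Real.pi ^ n * ∫ x in closedBall (z 0) 1, ‖h (Fin.cons x y₀)‖ :=
        mul_le_mul_of_nonneg_left h1d (by positivity)
    _ = ∫ x in closedBall (z 0) 1, Real.pi ^ n * ‖H (x, y₀)‖ := (integral_const_mul _ _).symm
    _ ≤ ∫ x in closedBall (z 0) 1,
          ∫ y in Set.univ.pi fun i => closedBall (y₀ i) 1, ‖H (x, y)‖ := by
        refine setIntegral_mono_on hlhsint hout measurableSet_closedBall fun x hx => ?_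
        exact ih (fun y => h (Fin.cons x y)) (analytic_cons_right hh x) y₀
    _ = ∫ p in T, ‖H p‖ ∂((volume : Measure ℂ).prod (volume : Measure (Fin n → ℂ))) :=
        (setIntegral_prod _ hTm).symm
    _ = _ := step1.symm

lemma growth_bound {b : ℕ} {F : (Fin b → ℂ) → ℂ} (hF : ∀ x, AnalyticAt ℂ F x)
    {m : ℕ} (hm : 0 < m)
    (hFint : Integrable (fun z : Fin b → ℂ =>
        ‖F z‖ ^ 2 * Real.exp (-(∑ i, ‖z i‖ ^ 2) / (m : ℝ) ^ 2)))
    (z : Fin b → ℂ) :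
    Real.pi ^ b * ‖F z‖ ^ 2 ≤
      Real.exp ((2 * (∑ i, ‖z i‖ ^ 2) + 2 * b) / (m : ℝ) ^ 2) *
        ∫ w, ‖F w‖ ^ 2 * Real.exp (-(∑ i, ‖w i‖ ^ 2) / (m : ℝ) ^ 2) := by
  have hFcont : Continuous F := continuous_iff_continuousAt.2 fun x => (hF x).continuousAt
  set S : Set (Fin b → ℂ) := Set.univ.pi fun i => closedBall (z i) 1 with hS
  set s : (Fin b → ℂ) → ℝ := fun w => ∑ i, ‖w i‖ ^ 2 with hs
  set K : ℝ := Real.exp ((2 * s z + 2 * b) / (m : ℝ) ^ 2) with hK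
  have hpoly := mv_polydisc b (fun w => F w * F w) (fun x => (hF x).mul (hF x)) z
  have hnm : ∀ w, ‖F w * F w‖ = ‖F w‖ ^ 2 := fun w => by rw [norm_mul, sq]
  simp only [hnm] at hpoly
  -- bound the sum on the polydisc
  have hsum : ∀ w ∈ S, s w ≤ 2 * s z + 2 * b := by
    intro w hw
    have h1 : ∀ i, ‖w i‖ ^ 2 ≤ 2 * ‖z i‖ ^ 2 + 2 := by
      intro i
      have hwi : dist (w i) (z i) ≤ 1 := (hw i (Set.mem_univ i))
      have h2 : ‖w i‖ ≤ ‖z i‖ + 1 := by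
        calc ‖w i‖ = ‖z i + (w i - z i)‖ := by ring_nf
        _ ≤ ‖z i‖ + ‖w i - z i‖ := norm_add_le _ _
        _ ≤ ‖z i‖ + 1 := by rw [← dist_eq_norm] at *; linarith
      nlinarith [sq_nonneg (‖z i‖ - 1), mul_self_le_mul_self (norm_nonneg (w i)) h2,
        norm_nonneg (w i), norm_nonneg (z i)]
    calc s w ≤ ∑ i, (2 * ‖z i‖ ^ 2 + 2) := Finset.sum_le_sum fun i _ => h1 i
    _ = 2 * s z + 2 * b := by
        rw [Finset.sum_add_distrib, ← Finset.mul_sum]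
        simp [hs]
        ring
  -- compare with the weighted integrand on S
  have hmono : ∫ w in S, ‖F w‖ ^ 2
      ≤ ∫ w in S, K * (‖F w‖ ^ 2 * Real.exp (-(s w) / (m : ℝ) ^ 2)) := by
    refine setIntegral_mono_on ?_ ?_ ?_ ?_
    · exact ((hFcont.norm.pow 2).continuousOn).integrableOn_compact
        (isCompact_univ_pi fun i => isCompact_closedBall _ _)
    · exact ((hFint.const_mul K)).integrableOn
    · exact MeasurableSet.univ_pi fun i => measurableSet_closedBall
    · intro w hw
      have h1 : (1:ℝ) ≤ Real.exp (-(s w) / (m : ℝ) ^ 2) * K := by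
        rw [hK, ← Real.exp_add]
        apply Real.one_le_exp
        rw [← add_div]
        apply div_nonneg _ (by positivity)
        have := hsum w hw
        linarith
      calc ‖F w‖ ^ 2 = ‖F w‖ ^ 2 * 1 := (mul_one _).symm
      _ ≤ ‖F w‖ ^ 2 * (Real.exp (-(s w) / (m : ℝ) ^ 2) * K) :=
          mul_le_mul_of_nonneg_left h1 (by positivity)
      _ = K * (‖F w‖ ^ 2 * Real.exp (-(s w) / (m : ℝ) ^ 2)) := by ring
  have hfull : ∫ w in S, K * (‖F w‖ ^ 2 * Real.exp (-(s w) / (m : ℝ) ^ 2))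
      ≤ K * ∫ w, ‖F w‖ ^ 2 * Real.exp (-(s w) / (m : ℝ) ^ 2) := by
    rw [integral_const_mul]
    apply mul_le_mul_of_nonneg_left _ (Real.exp_pos _).le
    exact setIntegral_le_integral hFint
      (Filter.Eventually.of_forall fun w => by positivity)
  calc Real.pi ^ b * ‖F z‖ ^ 2 ≤ ∫ w in S, ‖F w‖ ^ 2 := hpoly
  _ ≤ _ := le_trans hmono hfull

set_option maxHeartbeats 1000000 in
/-- Closure of the boson space `F_ψ` under the ψ product (Appendix C): if the
entire functions `F, G` on `ℂ^b` satisfy `∫|F|²e^{−‖z‖²/k²} < ∞` and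
`∫|G|²e^{−‖z‖²/k²} < ∞` for every positive integer `k`, then so does their
pointwise product `F·G`. -/
theorem segal_bargmann_psi_product_closure
    (b : ℕ) (hb : 0 < b)
    (F G : (Fin b → ℂ) → ℂ)
    (hF : ∀ x : Fin b → ℂ, AnalyticAt ℂ F x)
    (hG : ∀ x : Fin b → ℂ, AnalyticAt ℂ G x)
    (hFint : ∀ k : ℕ, 0 < k →
      Integrable (fun z : Fin b → ℂ =>
        ‖F z‖ ^ 2 * Real.exp (-(∑ i, ‖z i‖ ^ 2) / (k : ℝ) ^ 2)))
    (hGint : ∀ k : ℕ, 0 < k →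
      Integrable (fun z : Fin b → ℂ =>
        ‖G z‖ ^ 2 * Real.exp (-(∑ i, ‖z i‖ ^ 2) / (k : ℝ) ^ 2))) :
    ∀ k : ℕ, 0 < k →
      Integrable (fun z : Fin b → ℂ =>
        ‖F z * G z‖ ^ 2 * Real.exp (-(∑ i, ‖z i‖ ^ 2) / (k : ℝ) ^ 2)) := by
  intro k hk
  have hFcont : Continuous F := continuous_iff_continuousAt.2 fun x => (hF x).continuousAt
  have hGcont : Continuous G := continuous_iff_continuousAt.2 fun x => (hG x).continuousAt
  set m : ℕ := 2 * k with hmdef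
  have hm : 0 < m := by omega
  set C : ℝ := ∫ w, ‖F w‖ ^ 2 * Real.exp (-(∑ i, ‖w i‖ ^ 2) / (m : ℝ) ^ 2) with hC
  have hgrow := growth_bound hF hm (hFint m hm)
  set A : ℝ := Real.pi⁻¹ ^ b * (Real.exp ((2 * b) / (m : ℝ) ^ 2) * C) with hA
  -- the dominating function
  have hdom : Integrable (fun z : Fin b → ℂ =>
      A * (‖G z‖ ^ 2 * Real.exp (-(∑ i, ‖z i‖ ^ 2) / (m : ℝ) ^ 2))) :=
    (hGint m hm).const_mul A
  apply Integrable.mono' hdom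
  · apply Continuous.aestronglyMeasurable
    apply ((hFcont.mul hGcont).norm.pow 2).mul
    apply Real.continuous_exp.comp
    apply Continuous.div_const
    apply Continuous.neg
    exact continuous_finset_sum _ fun i _ => ((continuous_apply i).norm.pow 2)
  · apply Filter.Eventually.of_forall
    intro z
    set s : ℝ := ∑ i, ‖z i‖ ^ 2 with hs
    have hs0 : 0 ≤ s := Finset.sum_nonneg fun i _ => by positivity
    have hnorm : ‖‖F z * G z‖ ^ 2 * Real.exp (-s / (k : ℝ) ^ 2)‖
        = ‖F z‖ ^ 2 * ‖G z‖ ^ 2 * Real.exp (-s / (k : ℝ) ^ 2) := by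
      rw [Real.norm_of_nonneg (by positivity), norm_mul, mul_pow]
    rw [hnorm]
    -- pointwise bound from growth_bound
    have hkr : (0:ℝ) < (k : ℝ) ^ 2 := by positivity
    have hFz : ‖F z‖ ^ 2 ≤ Real.pi⁻¹ ^ b *
        (Real.exp ((2 * s + 2 * b) / (m : ℝ) ^ 2) * C) := by
      have hpib : (0:ℝ) < Real.pi ^ b := by positivity
      have := hgrow z
      rw [← hs] at this
      calc ‖F z‖ ^ 2 = (Real.pi ^ b)⁻¹ * (Real.pi ^ b * ‖F z‖ ^ 2) := by
            field_simp
      _ ≤ (Real.pi ^ b)⁻¹ * (Real.exp ((2 * s + 2 * b) / (m : ℝ) ^ 2) * C) := by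
            apply mul_le_mul_of_nonneg_left _ (by positivity)
            exact this
      _ = Real.pi⁻¹ ^ b * (Real.exp ((2 * s + 2 * b) / (m : ℝ) ^ 2) * C) := by
            rw [inv_pow]
    have hGz0 : (0:ℝ) ≤ ‖G z‖ ^ 2 * Real.exp (-s / (k : ℝ) ^ 2) := by positivity
    calc ‖F z‖ ^ 2 * ‖G z‖ ^ 2 * Real.exp (-s / (k : ℝ) ^ 2)
        = ‖F z‖ ^ 2 * (‖G z‖ ^ 2 * Real.exp (-s / (k : ℝ) ^ 2)) := by ring
    _ ≤ (Real.pi⁻¹ ^ b * (Real.exp ((2 * s + 2 * b) / (m : ℝ) ^ 2) * C))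
          * (‖G z‖ ^ 2 * Real.exp (-s / (k : ℝ) ^ 2)) :=
        mul_le_mul_of_nonneg_right hFz hGz0
    _ = (Real.pi⁻¹ ^ b * (Real.exp ((2 * b) / (m : ℝ) ^ 2) * C))
          * (‖G z‖ ^ 2 * (Real.exp ((2 * s) / (m : ℝ) ^ 2) * Real.exp (-s / (k : ℝ) ^ 2))) := by
        have hsplit : Real.exp ((2 * s + 2 * (b:ℝ)) / (m : ℝ) ^ 2)
            = Real.exp (2 * s / (m : ℝ) ^ 2) * Real.exp (2 * (b:ℝ) / (m : ℝ) ^ 2) := by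
          rw [← Real.exp_add, ← add_div]
        rw [hsplit]
        ring
    _ ≤ A * (‖G z‖ ^ 2 * Real.exp (-s / (m : ℝ) ^ 2)) := by
        have hC0 : (0:ℝ) ≤ C := by
          rw [hC]
          exact integral_nonneg fun w =>
            mul_nonneg (pow_nonneg (norm_nonneg _) 2) (Real.exp_pos _).le
        have hA0 : (0:ℝ) ≤ A := by
          rw [hA]
          exact mul_nonneg (pow_nonneg (inv_nonneg.2 Real.pi_pos.le) b)
            (mul_nonneg (Real.exp_pos _).le hC0)
        have hm2 : ((m:ℕ) : ℝ) ^ 2 = 4 * (k : ℝ) ^ 2 := by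
          rw [hmdef]; push_cast; ring
        have hexp : Real.exp (2 * s / (m : ℝ) ^ 2) * Real.exp (-s / (k : ℝ) ^ 2)
            ≤ Real.exp (-s / (m : ℝ) ^ 2) := by
          rw [← Real.exp_add, Real.exp_le_exp, hm2]
          have h4 : (0:ℝ) < 4 * (k : ℝ) ^ 2 := by positivity
          have hkk : ((k:ℝ)^2) ≠ 0 := by positivity
          have heq : 2 * s / (4 * (k:ℝ) ^ 2) + -s / (k:ℝ) ^ 2
              = (-2 * s) / (4 * (k:ℝ) ^ 2) := by
            field_simp
            ring
          rw [heq, div_le_div_iff₀ h4 h4]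
          nlinarith [sq_nonneg ((k:ℝ))]
        refine mul_le_mul_of_nonneg_left ?_ hA0
        exact mul_le_mul_of_nonneg_left hexp (by positivity)
end

section
/- Let γ, α ∈ ℂ and define F : ℂ → ℂ by F(z) = exp(½·γ·z² + α·z). Then the following are equivalent: (i) for every positive integer k, ∫_ℂ |F(z)|²·exp(−|z|²/k²) dz < ∞ (Lebesgue measure on ℂ ≅ ℝ²); (ii) γ = 0. -/
open MeasureTheory

private lemma forward_aux (γ α : ℂ) (hγ : γ ≠ 0)
    (h : ∀ k : ℕ, 0 < k →
      Integrable (fun z : ℂ =>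
        ‖Complex.exp (γ / 2 * z ^ 2 + α * z)‖ ^ 2 *
          Real.exp (-‖z‖ ^ 2 / (k : ℝ) ^ 2))) : False := by
  set c : ℝ := ‖γ‖ with hc_def
  have hc : 0 < c := norm_pos_iff.mpr hγ
  obtain ⟨k, hk⟩ := exists_nat_gt (max 1 (2 / c))
  have hk1 : (1:ℝ) < (k:ℝ) := (le_max_left _ _).trans_lt hk
  have hk2 : 2 / c < (k:ℝ) := (le_max_right _ _).trans_lt hk
  have hkpos : 0 < k := by exact_mod_cast zero_lt_one.trans hk1
  have hkR : (0:ℝ) < (k:ℝ) := zero_lt_one.trans hk1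
  have hint := h k hkpos
  have hbound1 : ((k:ℝ)^2)⁻¹ ≤ 1 := by
    rw [inv_le_one_iff₀]; right; nlinarith
  have hbound2 : ((k:ℝ)^2)⁻¹ ≤ c / 2 := by
    have h2c : (2:ℝ)/c < (k:ℝ)^2 := by nlinarith
    calc ((k:ℝ)^2)⁻¹ ≤ ((2:ℝ)/c)⁻¹ := by
          apply inv_anti₀ (by positivity) h2c.le
      _ = c/2 := by rw [inv_div]
  -- square root of c/γ on the unit circle
  have hd0 : ((c:ℂ)/γ) ≠ 0 := div_ne_zero (by exact_mod_cast hc.ne') hγ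
  set u : ℂ := Complex.exp (Complex.log ((c:ℂ)/γ) / 2) with hu_def
  have hu2 : u^2 = (c:ℂ)/γ := by
    rw [sq, ← Complex.exp_add, add_halves, Complex.exp_log hd0]
  have habs_d : ‖((c:ℂ)/γ)‖ = 1 := by
    rw [norm_div, Complex.norm_real, Real.norm_of_nonneg hc.le]
    rw [hc_def]
    exact div_self (norm_pos_iff.mpr hγ).ne'
  have hun : ‖u‖ = 1 := by
    rw [hu_def, Complex.norm_exp]
    have : (Complex.log ((c:ℂ)/γ) / 2).re = 0 := by
      rw [Complex.div_re]
      rw [Complex.log_re, habs_d]; simp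
    rw [this, Real.exp_zero]
  have hu0 : u ≠ 0 := by intro h0; rw [h0] at hun; simp at hun
  have hγu : γ * u^2 = (c:ℂ) := by
    rw [hu2]; field_simp
  -- constants
  set a : ℝ := ‖α‖ with ha_def
  have ha : 0 ≤ a := norm_nonneg _
  set M : ℝ := c + 2*a + 1 with hM_def
  have hM : 0 ≤ M := by positivity
  set T : ℝ := max 1 ((4*a + 2*M)/c) with hT_def
  -- the strip and the rotated strip
  set strip : Set ℂ := Complex.measurableEquivRealProd ⁻¹' (Set.Ici T ×ˢ Set.Icc (0:ℝ) 1)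
    with hstrip_def
  have hstrip_meas : MeasurableSet (Set.Ici T ×ˢ Set.Icc (0:ℝ) 1) :=
    measurableSet_Ici.prod measurableSet_Icc
  have hstrip_vol : volume strip = ⊤ := by
    rw [hstrip_def,
      Complex.volume_preserving_equiv_real_prod.measure_preimage
        hstrip_meas.nullMeasurableSet]
    rw [Measure.volume_eq_prod, Measure.prod_prod, Real.volume_Ici, Real.volume_Icc]
    simp
  have huinv : ‖u⁻¹‖ = 1 := by rw [norm_inv, hun]; norm_num
  set cu : Circle := ⟨u⁻¹, mem_sphere_zero_iff_norm.2 huinv⟩ with hcu_def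
  set S : Set ℂ := (fun z : ℂ => u⁻¹ * z) ⁻¹' strip with hS_def
  have hSvol : volume S = ⊤ := by
    have heq : S = (rotation cu) ⁻¹' strip := by
      ext z; simp [hS_def, rotation_apply, hcu_def]; exact Iff.rfl
    rw [heq, (rotation cu).measurePreserving.measure_preimage
      ((Complex.measurableEquivRealProd.measurable hstrip_meas).nullMeasurableSet)]
    exact hstrip_vol
  -- pointwise bound on S
  set f : ℂ → ℝ := fun z =>
    ‖Complex.exp (γ / 2 * z ^ 2 + α * z)‖ ^ 2 * Real.exp (-‖z‖ ^ 2 / (k : ℝ) ^ 2)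
    with hf_def
  have key : ∀ z ∈ S, 1 ≤ ‖f z‖ := by
    intro z hz
    set w : ℂ := u⁻¹ * z with hw_def
    have hzw : z = u * w := by rw [hw_def]; field_simp
    have hw : w ∈ strip := hz
    rw [hstrip_def, Set.mem_preimage, Complex.measurableEquivRealProd_apply] at hw
    have hx : T ≤ w.re := hw.1
    have hy0 : (0:ℝ) ≤ w.im := hw.2.1
    have hy1 : w.im ≤ 1 := hw.2.2
    set x : ℝ := w.re
    set y : ℝ := w.im
    have hx1 : (1:ℝ) ≤ x := le_trans (le_max_left _ _) hx
    have hxT : (4*a + 2*M)/c ≤ x := le_trans (le_max_right _ _) hx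
    have hcT : 4*a + 2*M ≤ c * x := by
      rw [div_le_iff₀ hc] at hxT; linarith [hxT]
    -- rewrite f z as a single exponential
    have hfz : f z = Real.exp ((γ*z^2).re + 2*(α*z).re - ‖z‖^2/(k:ℝ)^2) := by
      rw [hf_def]
      simp only [Complex.norm_exp, ← Real.exp_nat_mul, ← Real.exp_add]
      congr 1
      have h2 : ((2:ℕ):ℝ) * ((γ/2*z^2+α*z).re) = (γ*z^2).re + 2*(α*z).re := by
        have hre := congrArg Complex.re
          (show (2:ℂ) * (γ/2*z^2+α*z) = γ*z^2 + 2*(α*z) by ring)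
        simpa [Complex.mul_re] using hre
      rw [h2]; ring
    -- compute pieces
    have hz2 : (γ*z^2).re = c * (x^2 - y^2) := by
      have h1 : γ * z^2 = (c:ℂ) * w^2 := by
        calc γ * z^2 = (γ * u^2) * w^2 := by rw [hzw]; ring
          _ = (c:ℂ) * w^2 := by rw [hγu]
      have h2 : (w^2).re = x^2 - y^2 := by rw [sq, Complex.mul_re]; ring
      rw [h1, Complex.mul_re, Complex.ofReal_re, Complex.ofReal_im, h2]
      ring
    have hnz : ‖z‖ = ‖w‖ := by rw [hzw, norm_mul, hun, one_mul]
    have hnz2 : ‖z‖^2 = x^2 + y^2 := by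
      rw [hnz, Complex.sq_norm, Complex.normSq_apply]; ring
    have hwle : ‖w‖ ≤ x + 1 := by
      calc ‖w‖ ≤ |x| + |y| := by
            exact Complex.norm_le_abs_re_add_abs_im w
        _ ≤ x + 1 := by
            rw [_root_.abs_of_pos (by linarith : (0:ℝ) < x), _root_.abs_of_nonneg hy0]; linarith
    have hre_az : -(a*(x+1)) ≤ (α*z).re := by
      have h1 : -‖α*z‖ ≤ (α*z).re :=
        (abs_le.mp (Complex.abs_re_le_norm (α*z))).1
      have h2 : ‖α*z‖ ≤ a * (x+1) := by
        rw [norm_mul, hnz]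
        exact mul_le_mul_of_nonneg_left hwle ha
      linarith
    -- final inequality
    rw [hfz, Real.norm_of_nonneg (Real.exp_nonneg _), hz2, hnz2]
    rw [Real.one_le_exp_iff]
    have hy2 : y^2 ≤ 1 := by nlinarith
    have hq1 : (x^2+y^2) / (k:ℝ)^2 ≤ (c/2)*x^2 + 1 := by
      rw [div_eq_mul_inv]
      have e1 : x^2 * ((k:ℝ)^2)⁻¹ ≤ x^2 * (c/2) :=
        mul_le_mul_of_nonneg_left hbound2 (sq_nonneg x)
      have e2 : y^2 * ((k:ℝ)^2)⁻¹ ≤ 1 := by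
        calc y^2 * ((k:ℝ)^2)⁻¹ ≤ 1 * 1 := by
              apply mul_le_mul hy2 hbound1 (by positivity) zero_le_one
          _ = 1 := one_mul 1
      rw [add_mul]
      linarith [e1, e2]
    have hgrow : 2*a*x + M ≤ (c/2)*x^2 := by
      have e3 : (4*a+2*M)*x ≤ (c*x)*x := mul_le_mul_of_nonneg_right hcT (by linarith)
      have e4 : (0:ℝ) ≤ M * (x - 1) := mul_nonneg hM (by linarith)
      linarith [e3, e4]
    have e5 : c * y^2 ≤ c * 1 := mul_le_mul_of_nonneg_left hy2 hc.le
    linarith [hq1, hgrow, hre_az, e5]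
  -- contradiction from finite measure
  have hsub : S ⊆ {z : ℂ | 1 ≤ ‖f z‖} := fun z hz => key z hz
  have hfin := hint.measure_norm_ge_lt_top (ε := 1) one_pos
  have := (measure_mono hsub).trans_lt hfin
  rw [hSvol] at this
  exact absurd this (by simp)

private lemma backward_aux (α : ℂ) (k : ℕ) (hk : 0 < k) :
    Integrable (fun z : ℂ =>
      ‖Complex.exp ((0:ℂ) / 2 * z ^ 2 + α * z)‖ ^ 2 *
        Real.exp (-‖z‖ ^ 2 / (k : ℝ) ^ 2)) := by
  have hkR : (0:ℝ) < (k:ℝ) := by exact_mod_cast hk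
  have hb : (0:ℝ) < ((((k:ℝ)^2)⁻¹ : ℝ) : ℂ).re := by
    rw [Complex.ofReal_re]; positivity
  have h := (GaussianFourier.integrable_cexp_neg_mul_sq_norm_add (V := ℂ)
    hb 2 (starRingEnd ℂ α)).norm
  refine h.congr (Filter.Eventually.of_forall fun z => ?_)
  have hinner : (inner ℝ (starRingEnd ℂ α) z : ℝ) = (α * z).re := by
    rw [Complex.inner]
    simp; ring
  simp only [Complex.norm_exp, ← Real.exp_nat_mul, ← Real.exp_add,
    ← Real.exp_mul]
  rw [show ((2:ℕ):ℝ) = 2 by norm_num]  -- maybe not needed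
  congr 1
  simp only [Complex.add_re, Complex.neg_re, Complex.neg_im, Complex.mul_re,
    ← Complex.ofReal_pow, Complex.ofReal_re, Complex.ofReal_im, Complex.re_ofNat,
    Complex.im_ofNat, Complex.zero_re, Complex.zero_im, hinner]
  push_cast
  norm_num
  ring

/-- Characterization from Appendix C of the Gaussian exponentials in the
Fréchet space `F_ψ = ∩_k H_k`: `F(z) = exp(½γz² + αz)` satisfies
`∫|F(z)|²e^{−|z|²/k²} < ∞` for every positive integer `k` iff `γ = 0`. -/
theorem gaussian_exponential_in_Fpsi_iff
    (γ α : ℂ) :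
    (∀ k : ℕ, 0 < k →
      Integrable (fun z : ℂ =>
        ‖Complex.exp (γ / 2 * z ^ 2 + α * z)‖ ^ 2 *
          Real.exp (-‖z‖ ^ 2 / (k : ℝ) ^ 2))) ↔ γ = 0 := by
  constructor
  · intro h
    by_contra hγ
    exact forward_aux γ α hγ h
  · intro hγ
    subst hγ
    intro k hk
    exact backward_aux α k hk
end
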